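/- arXiv:2508.08449 — 3 statements merged into one kernel-verified Lean document; each statement's English description precedes it below -/
import Mathlib

section
/- Let K be a compact subset of ℂ, n ∈ ℕ, w : K → [0,∞) a bounded upper semicontinuous function nonzero at at least n+1 points of K, and P_n a monic polynomial of degree n. Then P_n is the weighted Chebyshev polynomial of degree n on K with respect to w if and only if there exist an integer m with n+1 ≤ m ≤ 2n+1, w-extremal points z₁, …, z_m of P_n on K, and positive real numbers λ₁, …, λ_m such that Σ_{j=1}^m λ_j z_j^k · conj(sgn(P_n(z_j))) = 0 for every k = 0, 1, …, n−1, where sgn(z) = z/|z|. -/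
open Polynomial Metric Set
open Filter Topology

/-- The weighted sup norm `‖P‖_{E,v} = sup_{z ∈ E} v(z) |P(z)|`. -/
noncomputable def wnorm (E : Set ℂ) (v : ℂ → ℝ) (P : Polynomial ℂ) : ℝ :=
  sSup ((fun z => v z * ‖P.eval z‖) '' E)

lemma wnorm_bdd {K : Set ℂ} (hK : IsCompact K) {w : ℂ → ℝ} (hwb : BddAbove (w '' K))
    (Q : Polynomial ℂ) : BddAbove ((fun z => w z * ‖Q.eval z‖) '' K) := by
  obtain ⟨W, hW⟩ := hwb
  have hbd : BddAbove ((fun z => ‖Q.eval z‖) '' K) :=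
    (hK.image (by continuity)).bddAbove
  obtain ⟨C, hC⟩ := hbd
  refine ⟨max W 0 * max C 0, ?_⟩
  rintro x ⟨z, hz, rfl⟩
  have h1 : w z ≤ max W 0 := le_trans (hW ⟨z, hz, rfl⟩) (le_max_left _ _)
  have h2 : ‖Q.eval z‖ ≤ max C 0 := le_trans (hC ⟨z, hz, rfl⟩) (le_max_left _ _)
  exact mul_le_mul h1 h2 (norm_nonneg _) (le_max_right _ _)

lemma le_wnorm {K : Set ℂ} (hK : IsCompact K) {w : ℂ → ℝ} (hwb : BddAbove (w '' K))
    (Q : Polynomial ℂ) {z : ℂ} (hz : z ∈ K) :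
    w z * ‖Q.eval z‖ ≤ wnorm K w Q :=
  le_csSup (wnorm_bdd hK hwb Q) ⟨z, hz, rfl⟩

lemma wnorm_le {K : Set ℂ} (hne : K.Nonempty) {w : ℂ → ℝ} {Q : Polynomial ℂ} {c : ℝ}
    (h : ∀ z ∈ K, w z * ‖Q.eval z‖ ≤ c) : wnorm K w Q ≤ c :=
  csSup_le (hne.image _) (by rintro x ⟨z, hz, rfl⟩; exact h z hz)

lemma wnorm_pos {K : Set ℂ} (hK : IsCompact K) {n : ℕ} {w : ℂ → ℝ}
    (hw0 : ∀ z ∈ K, 0 ≤ w z) (hwb : BddAbove (w '' K))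
    (hsupp : ∃ S : Finset ℂ, ↑S ⊆ K ∧ n + 1 ≤ S.card ∧ ∀ z ∈ S, w z ≠ 0)
    {P : Polynomial ℂ} (hP0 : P ≠ 0) (hdeg : P.natDegree = n) : 0 < wnorm K w P := by
  obtain ⟨S, hSK, hScard, hSw⟩ := hsupp
  have hex : ∃ z ∈ S, P.eval z ≠ 0 := by
    by_contra h
    push_neg at h
    have hsub : S ⊆ P.roots.toFinset := by
      intro z hz
      simp only [Multiset.mem_toFinset, mem_roots hP0]
      exact h z hz
    have h2 := (Finset.card_le_card hsub).trans ((P.roots.toFinset_card_le).trans (P.card_roots'))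
    rw [hdeg] at h2
    omega
  obtain ⟨z, hzS, hz⟩ := hex
  have hzK : z ∈ K := hSK hzS
  have : 0 < w z * ‖P.eval z‖ :=
    mul_pos ((hw0 z hzK).lt_of_ne (Ne.symm (hSw z hzS)))
      (norm_pos_iff.mpr hz)
  exact lt_of_lt_of_le this (le_wnorm hK hwb P hzK)

lemma key_lim {K : Set ℂ} {w : ℂ → ℝ} (hw0 : ∀ z ∈ K, 0 ≤ w z)
    (husc : UpperSemicontinuousOn w K) (P : Polynomial ℂ) {u : ℕ → ℂ}
    (hu : ∀ j, u j ∈ K) {z₀ : ℂ} (hz₀ : z₀ ∈ K)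
    (hlim : Tendsto u atTop (𝓝 z₀)) {M : ℝ} {ε : ℕ → ℝ}
    (hε : Tendsto ε atTop (𝓝 0))
    (h : ∀ j, M - ε j ≤ w (u j) * ‖P.eval (u j)‖) :
    M ≤ w z₀ * ‖P.eval z₀‖ := by
  by_contra hlt
  push_neg at hlt
  obtain ⟨L, hL⟩ : ∃ L, L = ‖P.eval z₀‖ := ⟨_, rfl⟩
  rw [← hL] at hlt
  have hL0 : 0 ≤ L := hL ▸ norm_nonneg _
  have hw0' : 0 ≤ w z₀ := hw0 z₀ hz₀
  obtain ⟨y, hy⟩ : ∃ y, y = w z₀ + min 1 ((M - w z₀ * L) / (L + 1)) := ⟨_, rfl⟩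
  have hnum : 0 < M - w z₀ * L := by linarith
  have hLd : (0:ℝ) < L + 1 := by linarith
  have hmin : 0 < min 1 ((M - w z₀ * L) / (L + 1)) :=
    lt_min one_pos (div_pos hnum hLd)
  have hy1 : w z₀ < y := by rw [hy]; linarith
  have hypos : 0 < y := lt_of_le_of_lt hw0' hy1
  have hy2 : y * L < M := by
    have h1 : min 1 ((M - w z₀ * L) / (L + 1)) * L ≤ ((M - w z₀ * L) / (L + 1)) * L :=
      mul_le_mul_of_nonneg_right (min_le_right _ _) hL0
    have h2 : ((M - w z₀ * L) / (L + 1)) * L < M - w z₀ * L := by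
      rw [div_mul_eq_mul_div, div_lt_iff₀ hLd]
      nlinarith
    have : y * L = w z₀ * L + min 1 ((M - w z₀ * L) / (L + 1)) * L := by rw [hy]; ring
    linarith
  obtain ⟨c, hc⟩ : ∃ c, c = (y * L + M) / 2 := ⟨_, rfl⟩
  have hc1 : y * L < c := by rw [hc]; linarith
  have hc2 : c < M := by rw [hc]; linarith
  have hLc : L < c / y := (lt_div_iff₀ hypos).2 (by nlinarith [hc1])
  have husc' : ∀ᶠ j in atTop, w (u j) < y := by
    have := husc z₀ hz₀ y hy1
    have htd : Tendsto u atTop (𝓝[K] z₀) :=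
      tendsto_nhdsWithin_iff.2 ⟨hlim, Eventually.of_forall hu⟩
    exact htd.eventually this
  have habs : ∀ᶠ j in atTop, ‖P.eval (u j)‖ < c / y := by
    have hcont : Tendsto (fun j => ‖P.eval (u j)‖) atTop
        (𝓝 (‖P.eval z₀‖)) :=
      (continuous_norm.tendsto _).comp ((P.continuous.tendsto z₀).comp hlim)
    rw [← hL] at hcont
    exact hcont.eventually_lt_const hLc
  have hεev : ∀ᶠ j in atTop, ε j < M - c := hε.eventually_lt_const (by linarith)
  obtain ⟨j, h1, h2, h3⟩ := (husc'.and (habs.and hεev)).exists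
  have : w (u j) * ‖P.eval (u j)‖ < c := by
    calc w (u j) * ‖P.eval (u j)‖ < y * (c / y) :=
      mul_lt_mul'' h1 h2 (hw0 _ (hu j)) (norm_nonneg _)
    _ = c := by field_simp
  linarith [h j, h3]

lemma exists_extremal {K : Set ℂ} (hK : IsCompact K) (hne : K.Nonempty) {w : ℂ → ℝ}
    (hw0 : ∀ z ∈ K, 0 ≤ w z) (hwb : BddAbove (w '' K))
    (husc : UpperSemicontinuousOn w K) (P : Polynomial ℂ) :
    ∃ z₀ ∈ K, w z₀ * ‖P.eval z₀‖ = wnorm K w P := by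
  have hchoice : ∀ j : ℕ, ∃ z ∈ K,
      wnorm K w P - 1 / (j + 1) < w z * ‖P.eval z‖ := by
    intro j
    have hlt : wnorm K w P - 1 / (j + 1) < sSup ((fun z => w z * ‖P.eval z‖) '' K) := by
      have : (0:ℝ) < 1 / (j + 1) := by positivity
      unfold wnorm; linarith
    obtain ⟨x, ⟨z, hz, rfl⟩, hx⟩ := exists_lt_of_lt_csSup (hne.image _) hlt
    exact ⟨z, hz, hx⟩
  choose u huK hu using hchoice
  obtain ⟨z₀, hz₀, φ, hφ, hφlim⟩ := hK.tendsto_subseq huK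
  have hεlim : Tendsto (fun j => 1 / ((φ j : ℝ) + 1)) atTop (𝓝 0) := by
    apply Tendsto.comp tendsto_one_div_add_atTop_nhds_zero_nat
    exact hφ.tendsto_atTop
  have hge := key_lim hw0 husc P (fun j => huK (φ j)) hz₀ hφlim hεlim
    (fun j => (hu (φ j)).le)
  refine ⟨z₀, hz₀, le_antisymm (le_wnorm hK hwb P hz₀) hge⟩

lemma abs_sub_sq' (a b : ℂ) (t : ℝ) :
    (‖a - t*b‖)^2
      = (‖a‖)^2 - 2*t*((starRingEnd ℂ) a * b).re + t^2*(‖b‖)^2 := by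
  simp only [Complex.sq_norm, Complex.normSq_apply, Complex.sub_re, Complex.sub_im,
    Complex.mul_re, Complex.mul_im, Complex.ofReal_re, Complex.ofReal_im,
    Complex.conj_re, Complex.conj_im]
  ring

lemma isCompact_convexHull' {E : Type*} [NormedAddCommGroup E] [NormedSpace ℝ E]
    [FiniteDimensional ℝ E] {s : Set E} (hs : IsCompact s) (hne : s.Nonempty) :
    IsCompact (convexHull ℝ s) := by
  classical
  obtain ⟨x₀, hx₀⟩ := hne
  set N := Module.finrank ℝ E + 1 with hN
  set g : (Fin N → ℝ) × (Fin N → E) → E := fun p => ∑ i, p.1 i • p.2 i with hg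
  set dom : Set ((Fin N → ℝ) × (Fin N → E)) :=
    (stdSimplex ℝ (Fin N)) ×ˢ (Set.univ.pi fun _ => s) with hdom
  have hgc : Continuous g := by
    apply continuous_finset_sum
    intro i _
    exact ((continuous_apply i).comp continuous_fst).smul
      ((continuous_apply i).comp continuous_snd)
  have hdomc : IsCompact dom :=
    (isCompact_stdSimplex ℝ (Fin N)).prod (isCompact_univ_pi fun _ => hs)
  have heq : convexHull ℝ s = g '' dom := by
    apply Set.Subset.antisymm
    · intro x hx
      obtain ⟨ι, hfin, zv, wv, hrange, hai, hpos, hsum1, hsum⟩ :=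
        eq_pos_convex_span_of_mem_convexHull hx
      have hcard : Fintype.card ι ≤ N := by
        have h1 := hai.card_le_finrank_succ
        have h2 : Module.finrank ℝ (vectorSpan ℝ (Set.range zv)) ≤ Module.finrank ℝ E :=
          Submodule.finrank_le _
        omega
      obtain ⟨e⟩ : Nonempty (ι ↪ Fin N) := by
        rw [Function.Embedding.nonempty_iff_card_le, Fintype.card_fin]
        exact hcard
      refine ⟨(Function.extend e wv 0, Function.extend e zv (fun _ => x₀)), ⟨?_, ?_⟩, ?_⟩
      · constructor
        · intro i
          dsimp only
          by_cases h : ∃ a, e a = i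
          · obtain ⟨a, rfl⟩ := h
            rw [e.injective.extend_apply]
            exact (hpos a).le
          · rw [Function.extend_apply' _ _ _ h]
            rfl
        · dsimp only
          rw [← hsum1]
          rw [← Finset.sum_subset (Finset.subset_univ (Finset.univ.map e))]
          · rw [Finset.sum_map]
            refine Finset.sum_congr rfl fun a _ => ?_
            exact e.injective.extend_apply _ _ _
          · intro i _ hi
            have h : ¬∃ a, e a = i := by
              simpa [Finset.mem_map] using hi
            rw [Function.extend_apply' _ _ _ h]
            rfl
      · intro i _
        dsimp only
        by_cases h : ∃ a, e a = i
        · obtain ⟨a, rfl⟩ := h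
          rw [e.injective.extend_apply]
          exact hrange ⟨a, rfl⟩
        · rw [Function.extend_apply' _ _ _ h]
          exact hx₀
      · show ∑ i, _ • _ = x
        dsimp only
        rw [← hsum]
        rw [← Finset.sum_subset (Finset.subset_univ (Finset.univ.map e))]
        · rw [Finset.sum_map]
          refine Finset.sum_congr rfl fun a _ => ?_
          rw [e.injective.extend_apply, e.injective.extend_apply]
        · intro i _ hi
          have h : ¬∃ a, e a = i := by
            simpa [Finset.mem_map] using hi
          rw [Function.extend_apply' _ _ _ h]
          simp
    · rintro x ⟨⟨W, v⟩, ⟨hW, hv⟩, rfl⟩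
      have h1 : ∀ i ∈ Finset.univ, (0:ℝ) ≤ W i := fun i _ => hW.1 i
      have h2 : (0:ℝ) < ∑ i, W i := by rw [hW.2]; norm_num
      have h3 : ∀ i ∈ Finset.univ, v i ∈ s := fun i _ => hv i trivial
      have h4 := Finset.centerMass_mem_convexHull Finset.univ h1 h2 h3
      rwa [Finset.centerMass_eq_of_sum_1 _ _ hW.2] at h4
  rw [heq]
  exact hdomc.image hgc

lemma lin_rep {n : ℕ} (f : (Fin n → ℂ) →L[ℝ] ℝ) :
    ∃ c : Fin n → ℂ, ∀ v : Fin n → ℂ, f v = (∑ k, (starRingEnd ℂ) (c k) * v k).re := by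
  refine ⟨fun k => ⟨f (Pi.single k 1), f (Pi.single k Complex.I)⟩, fun v => ?_⟩
  have hv : v = ∑ k, Pi.single k (v k) := by
    rw [Finset.univ_sum_single]
  conv_lhs => rw [hv]
  rw [map_sum, Complex.re_sum]
  refine Finset.sum_congr rfl fun k _ => ?_
  have hsingle : Pi.single k (v k)
      = (v k).re • (Pi.single k (1:ℂ) : Fin n → ℂ)
        + (v k).im • (Pi.single k Complex.I : Fin n → ℂ) := by
    funext j
    by_cases h : j = k
    · subst h
      simp only [Pi.smul_apply, Pi.single_eq_same, Complex.real_smul, smul_eq_mul, mul_one,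
        Pi.add_apply]
      rw [Complex.re_add_im]
    · simp [Pi.single_eq_of_ne h]
  rw [hsingle, map_add, map_smul, map_smul]
  simp only [Complex.mul_re, Complex.conj_re, Complex.conj_im, smul_eq_mul]
  ring

set_option maxHeartbeats 1000000 in
lemma improve {K : Set ℂ} (hK : IsCompact K) (hne : K.Nonempty) {w : ℂ → ℝ}
    (hw0 : ∀ z ∈ K, 0 ≤ w z) (hwb : BddAbove (w '' K)) (husc : UpperSemicontinuousOn w K)
    (P R : Polynomial ℂ) (hM : 0 < wnorm K w P)
    (hE : ∀ z ∈ K, w z * ‖P.eval z‖ = wnorm K w P →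
      0 < ((starRingEnd ℂ) (P.eval z) * R.eval z).re) :
    ∃ t : ℝ, 0 < t ∧ wnorm K w (P - C (t:ℂ) * R) < wnorm K w P := by
  by_contra hcon
  push_neg at hcon
  obtain ⟨M, hMeq⟩ : ∃ M, M = wnorm K w P := ⟨_, rfl⟩
  rw [← hMeq] at hM hE hcon
  -- bounds
  obtain ⟨W₀, hW₀⟩ := id hwb
  obtain ⟨W, hWnn, hW⟩ : ∃ W, 0 ≤ W ∧ ∀ z ∈ K, w z ≤ W :=
    ⟨max W₀ 0, le_max_right _ _, fun z hz => le_trans (hW₀ ⟨z, hz, rfl⟩) (le_max_left _ _)⟩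
  have hbdR : BddAbove ((fun z => ‖R.eval z‖) '' K) :=
    (hK.image (by continuity)).bddAbove
  obtain ⟨C₀, hC₀⟩ := hbdR
  obtain ⟨CR, hCRnn, hCR⟩ : ∃ CR, 0 ≤ CR ∧ ∀ z ∈ K, ‖R.eval z‖ ≤ CR :=
    ⟨max C₀ 0, le_max_right _ _, fun z hz => le_trans (hC₀ ⟨z, hz, rfl⟩) (le_max_left _ _)⟩
  -- choose near-extremal points
  have hch : ∀ j : ℕ, ∃ z ∈ K, M - (1/((j:ℝ)+1))^2
      < w z * ‖(P - C ((1/((j:ℝ)+1) : ℝ) : ℂ) * R).eval z‖ := by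
    intro j
    have htpos : (0:ℝ) < 1/((j:ℝ)+1) := by positivity
    have h1 := hcon (1/((j:ℝ)+1)) htpos
    have hlt : M - (1/((j:ℝ)+1))^2
        < sSup ((fun z => w z * ‖(P - C ((1/((j:ℝ)+1) : ℝ) : ℂ) * R).eval z‖) '' K) := by
      have h2 : (0:ℝ) < (1/((j:ℝ)+1))^2 := by positivity
      unfold wnorm at h1
      linarith
    obtain ⟨x, ⟨z, hz, rfl⟩, hx⟩ := exists_lt_of_lt_csSup (hne.image _) hlt
    exact ⟨z, hz, hx⟩
  choose u huK hu using hch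
  obtain ⟨z₀, hz₀, φ, hφ, hφlim⟩ := hK.tendsto_subseq huK
  set t : ℕ → ℝ := fun j => 1/((φ j : ℝ)+1) with ht
  have htpos : ∀ j, 0 < t j := fun j => by positivity
  have htlim : Tendsto t atTop (𝓝 0) :=
    tendsto_one_div_add_atTop_nhds_zero_nat.comp hφ.tendsto_atTop
  set V : ℕ → ℂ := fun j => u (φ j) with hV
  have hVK : ∀ j, V j ∈ K := fun j => huK (φ j)
  -- rewrite the chosen inequality
  have hu' : ∀ j, M - (t j)^2 < w (V j) * ‖P.eval (V j) - (t j : ℂ) * R.eval (V j)‖ := by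
    intro j
    have h0 := hu (φ j)
    simp only [eval_sub, eval_mul, eval_C] at h0
    exact h0
  -- z₀ is extremal
  have hext : w z₀ * ‖P.eval z₀‖ = M := by
    refine le_antisymm (hMeq ▸ le_wnorm hK hwb P hz₀) ?_
    refine key_lim hw0 husc P hVK hz₀ hφlim
      (ε := fun j => (t j)^2 + t j * (W * CR)) ?_ ?_
    · have : Tendsto (fun j => (t j)^2 + t j * (W * CR)) atTop (𝓝 (0^2 + 0 * (W * CR))) :=
        ((htlim.pow 2).add (htlim.mul_const _))
      simpa using this
    · intro j
      show M - ((t j)^2 + t j * (W * CR)) ≤ w (V j) * ‖P.eval (V j)‖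
      have h1 := hu' j
      have htri : ‖P.eval (V j) - (t j : ℂ) * R.eval (V j)‖
          ≤ ‖P.eval (V j)‖ + t j * ‖R.eval (V j)‖ := by
        calc ‖P.eval (V j) - (t j : ℂ) * R.eval (V j)‖
            ≤ ‖P.eval (V j)‖ + ‖(t j : ℂ) * R.eval (V j)‖ := by
              exact (norm_sub_le _ _)
        _ = ‖P.eval (V j)‖ + t j * ‖R.eval (V j)‖ := by
              rw [norm_mul, Complex.norm_real, Real.norm_eq_abs, abs_of_pos (htpos j)]
      have hwnn := hw0 _ (hVK j)
      have h2 : w (V j) * ‖P.eval (V j) - (t j : ℂ) * R.eval (V j)‖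
          ≤ w (V j) * ‖P.eval (V j)‖ + t j * (W * CR) := by
        have h3 := mul_le_mul_of_nonneg_left htri hwnn
        have h4 : w (V j) * (t j * ‖R.eval (V j)‖) ≤ t j * (W * CR) := by
          have h5 : w (V j) * ‖R.eval (V j)‖ ≤ W * CR :=
            mul_le_mul (hW _ (hVK j)) (hCR _ (hVK j)) (norm_nonneg _) hWnn
          calc w (V j) * (t j * ‖R.eval (V j)‖)
              = t j * (w (V j) * ‖R.eval (V j)‖) := by ring
          _ ≤ t j * (W * CR) := mul_le_mul_of_nonneg_left h5 (htpos j).le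
        nlinarith [h3, h4]
      linarith
  obtain ⟨L, hLeq⟩ : ∃ L, L = ‖P.eval z₀‖ := ⟨_, rfl⟩
  have hL0 : 0 ≤ L := hLeq ▸ norm_nonneg _
  have hLpos : 0 < L := by
    rcases hL0.lt_or_eq with h | h
    · exact h
    · exfalso
      have hwL : w z₀ * L = M := by rw [hLeq]; exact hext
      rw [← h, mul_zero] at hwL
      linarith
  obtain ⟨ψ₀, hψeq⟩ : ∃ p, p = ((starRingEnd ℂ) (P.eval z₀) * R.eval z₀).re := ⟨_, rfl⟩
  have hψ0 : 0 < ψ₀ := hψeq ▸ hE z₀ hz₀ hext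
  obtain ⟨a₀, ha₀eq⟩ : ∃ a, a = M/(2*(L+1)) := ⟨_, rfl⟩
  have ha₀ : 0 < a₀ := by rw [ha₀eq]; positivity
  -- eventual statements
  have hVtd : Tendsto V atTop (𝓝 z₀) := hφlim
  have hψev : ∀ᶠ j in atTop, ψ₀/2 < ((starRingEnd ℂ) (P.eval (V j)) * R.eval (V j)).re := by
    have hcont : Continuous fun z => ((starRingEnd ℂ) (P.eval z) * R.eval z).re :=
      Complex.continuous_re.comp (((Complex.continuous_conj.comp P.continuous).mul R.continuous))
    have := (hcont.tendsto z₀).comp hVtd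
    rw [← hψeq] at this
    exact this.eventually_const_lt (by linarith)
  have habs2 : ∀ᶠ j in atTop,
      ‖P.eval (V j) - (t j : ℂ) * R.eval (V j)‖ < L + 1 := by
    have h1 : Tendsto (fun j => P.eval (V j) - (t j : ℂ) * R.eval (V j)) atTop
        (𝓝 (P.eval z₀ - (0:ℂ) * R.eval z₀)) := by
      refine Tendsto.sub ((P.continuous.tendsto z₀).comp hVtd) ?_
      exact Tendsto.mul ((Complex.continuous_ofReal.tendsto 0).comp htlim)
        ((R.continuous.tendsto z₀).comp hVtd)
    have h2 := (continuous_norm.tendsto _).comp h1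
    simp only [zero_mul, sub_zero, Function.comp] at h2
    rw [← hLeq] at h2
    exact h2.eventually_lt_const (by linarith)
  have hcRev : ∀ᶠ j in atTop, t j * (‖R.eval (V j)‖)^2 < ψ₀/2 := by
    have h1 : Tendsto (fun j => t j * (‖R.eval (V j)‖)^2) atTop
        (𝓝 (0 * (‖R.eval z₀‖)^2)) := by
      refine Tendsto.mul htlim ?_
      exact (((continuous_norm.comp R.continuous).pow 2).tendsto z₀).comp hVtd
    rw [zero_mul] at h1
    exact h1.eventually_lt_const (by linarith)
  have hdev : ∀ᶠ j in atTop, (t j)^2 < M/2 := by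
    have h1 : Tendsto (fun j => (t j)^2) atTop (𝓝 0) := by
      have := htlim.pow 2
      simpa using this
    exact h1.eventually_lt_const (by linarith)
  have hfev : ∀ᶠ j in atTop, 2*M*(t j) < (ψ₀/2) * a₀^2 := by
    have h1 : Tendsto (fun j => 2*M*(t j)) atTop (𝓝 (2*M*0)) := htlim.const_mul _
    rw [mul_zero] at h1
    exact h1.eventually_lt_const (by positivity)
  obtain ⟨j, hψj, habsj, hcRj, hdj, hfj⟩ :=
    (hψev.and (habs2.and (hcRev.and (hdev.and hfev)))).exists
  have h_e := hu' j
  have hwnn : 0 ≤ w (V j) := hw0 _ (hVK j)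
  have hwA : w (V j) * ‖P.eval (V j)‖ ≤ M := hMeq ▸ le_wnorm hK hwb P (hVK j)
  have hMt : 0 < M - (t j)^2 := by linarith
  have hid := abs_sub_sq' (P.eval (V j)) (R.eval (V j)) (t j)
  have h1 : (‖P.eval (V j) - (t j:ℂ) * R.eval (V j)‖)^2
      ≤ (‖P.eval (V j)‖)^2 - (t j) * (ψ₀/2) := by
    rw [hid]
    nlinarith [mul_le_mul_of_nonneg_left hψj.le (htpos j).le,
      mul_le_mul_of_nonneg_left hcRj.le (htpos j).le]
  have hwlow : a₀ ≤ w (V j) := by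
    have h3 : (M - (t j)^2) < w (V j) * (L+1) :=
      lt_of_lt_of_le h_e (mul_le_mul_of_nonneg_left habsj.le hwnn)
    rw [ha₀eq, div_le_iff₀ (by linarith : (0:ℝ) < 2*(L+1))]
    nlinarith
  have hsq : (M - (t j)^2)^2
      < (w (V j))^2 * (‖P.eval (V j) - (t j:ℂ) * R.eval (V j)‖)^2 := by
    have := pow_lt_pow_left₀ h_e hMt.le (n := 2) (by norm_num)
    rw [mul_pow] at this
    exact this
  have h4 : (w (V j))^2 * (‖P.eval (V j) - (t j:ℂ) * R.eval (V j)‖)^2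
      ≤ (w (V j))^2 * ((‖P.eval (V j)‖)^2 - (t j) * (ψ₀/2)) :=
    mul_le_mul_of_nonneg_left h1 (sq_nonneg _)
  have h5 : (w (V j))^2 * (‖P.eval (V j)‖)^2 ≤ M^2 := by
    have h6 : (w (V j) * ‖P.eval (V j)‖)^2 ≤ M^2 :=
      pow_le_pow_left₀ (mul_nonneg hwnn (norm_nonneg _)) hwA 2
    rw [mul_pow] at h6
    exact h6
  have h7 : a₀^2 ≤ (w (V j))^2 := pow_le_pow_left₀ ha₀.le hwlow 2
  have h8 : (t j) * (ψ₀/2) * a₀^2 ≤ (t j) * (ψ₀/2) * (w (V j))^2 :=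
    mul_le_mul_of_nonneg_left h7 (by positivity)
  have h9 := mul_lt_mul_of_pos_left hfj (htpos j)
  nlinarith [htpos j, sq_nonneg (t j)]


theorem necessity (K : Set ℂ) (hK : IsCompact K) (n : ℕ) (w : ℂ → ℝ)
    (hw0 : ∀ z ∈ K, 0 ≤ w z) (hwb : BddAbove (w '' K))
    (husc : UpperSemicontinuousOn w K)
    (hsupp : ∃ S : Finset ℂ, ↑S ⊆ K ∧ n + 1 ≤ S.card ∧ ∀ z ∈ S, w z ≠ 0)
    (P : Polynomial ℂ) (hmonic : P.Monic) (hdeg : P.natDegree = n)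
    (hopt : ∀ Q : Polynomial ℂ, Q.Monic → Q.natDegree = n → wnorm K w P ≤ wnorm K w Q) :
    ∃ (m : ℕ), n + 1 ≤ m ∧ m ≤ 2 * n + 1 ∧
      ∃ (z : Fin m → ℂ) (lam : Fin m → ℝ),
        Function.Injective z ∧
        (∀ j, z j ∈ K ∧ w (z j) * ‖P.eval (z j)‖ = wnorm K w P) ∧
        (∀ j, 0 < lam j) ∧
        ∀ k : ℕ, k < n →
          (∑ j, (lam j : ℂ) * (z j) ^ k *
            (starRingEnd ℂ) (P.eval (z j) / (‖P.eval (z j)‖ : ℂ))) = 0 := by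
  classical
  have hP0 : P ≠ 0 := hmonic.ne_zero
  have hKne : K.Nonempty := by
    obtain ⟨S, hSK, hcard, -⟩ := hsupp
    have hSpos : 0 < S.card := by omega
    obtain ⟨z, hz⟩ := Finset.card_pos.1 hSpos
    exact ⟨z, hSK hz⟩
  have hM : 0 < wnorm K w P := wnorm_pos hK hw0 hwb hsupp hP0 hdeg
  set σ : ℂ → ℂ := fun z => P.eval z / (‖P.eval z‖ : ℂ) with hσ
  set φf : ℂ → (Fin n → ℂ) := fun z => fun k => z^(k:ℕ) * (starRingEnd ℂ) (σ z) with hφf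
  set E : Set ℂ := {z | z ∈ K ∧ w z * ‖P.eval z‖ = wnorm K w P} with hE
  have hEK : E ⊆ K := fun z hz => hz.1
  have hEne : E.Nonempty := by
    obtain ⟨z₀, hz₀, h⟩ := exists_extremal hK hKne hw0 hwb husc P
    exact ⟨z₀, hz₀, h⟩
  have hPE : ∀ z ∈ E, P.eval z ≠ 0 := by
    intro z hz hc
    have := hz.2
    rw [hc] at this
    simp at this
    rw [← this] at hM
    simp at hM
  have habsE : ∀ z ∈ E, (0:ℝ) < ‖P.eval z‖ := fun z hz => norm_pos_iff.mpr (hPE z hz)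
  have hσabs : ∀ z ∈ E, ‖σ z‖ = 1 := by
    intro z hz
    rw [hσ]
    simp only [norm_div, Complex.norm_real, Real.norm_eq_abs, abs_of_pos (habsE z hz)]
    rw [div_self (ne_of_gt (habsE z hz))]
  have hσne : ∀ z ∈ E, σ z ≠ 0 := by
    intro z hz h
    have := hσabs z hz
    rw [h] at this
    simp at this
  have hEclosed : IsClosed E := by
    apply IsSeqClosed.isClosed
    intro u z₀ hu hlim
    have hz₀K : z₀ ∈ K := hK.isClosed.mem_of_tendsto hlim (Eventually.of_forall fun j => (hu j).1)
    have hge : wnorm K w P ≤ w z₀ * ‖P.eval z₀‖ :=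
      key_lim hw0 husc P (fun j => (hu j).1) hz₀K hlim (ε := fun _ => 0) tendsto_const_nhds
        (fun j => by rw [sub_zero]; exact ((hu j).2).ge)
    exact ⟨hz₀K, le_antisymm (le_wnorm hK hwb P hz₀K) hge⟩
  have hEcomp : IsCompact E := hK.of_isClosed_subset hEclosed hEK
  have hφcont : ContinuousOn φf E := by
    rw [hφf, continuousOn_pi]
    intro k
    apply ContinuousOn.mul (Continuous.continuousOn (by continuity))
    apply Complex.continuous_conj.comp_continuousOn
    apply ContinuousOn.div P.continuous.continuousOn
      (Complex.continuous_ofReal.comp (continuous_norm.comp P.continuous)).continuousOn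
    intro z hz
    simpa using (hPE z hz)
  have hA : IsCompact (φf '' E) := hEcomp.image_of_continuousOn hφcont
  -- THE CLAIM
  have hclaim : (0 : Fin n → ℂ) ∈ convexHull ℝ (φf '' E) := by
    by_contra h0
    rcases Nat.eq_zero_or_pos n with hn | hn
    · subst hn
      obtain ⟨z₀, hz₀⟩ := hEne
      exact h0 (subset_convexHull ℝ _ ⟨z₀, hz₀, Subsingleton.elim _ _⟩)
    have hhull := isCompact_convexHull' hA (hEne.image _)
    obtain ⟨f, u0, hfa, hu0⟩ :=
      geometric_hahn_banach_closed_point (convex_convexHull ℝ _) hhull.isClosed h0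
    rw [map_zero] at hu0
    obtain ⟨c, hc⟩ := lin_rep f
    set R : Polynomial ℂ := -∑ k : Fin n, Polynomial.C ((starRingEnd ℂ) (c k)) * X^(k:ℕ)
      with hR
    have hRdeg : R.natDegree < n := by
      rw [hR, natDegree_neg]
      have h1 : (∑ k : Fin n, Polynomial.C ((starRingEnd ℂ) (c k)) * X^(k:ℕ)).natDegree ≤ n - 1 := by
        apply Polynomial.natDegree_sum_le_of_forall_le
        intro k _
        refine le_trans (natDegree_C_mul_le _ _) ?_
        rw [natDegree_X_pow]
        have := k.isLt
        omega
      omega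
    have hReval : ∀ z : ℂ, R.eval z = -∑ k : Fin n, (starRingEnd ℂ) (c k) * z^(k:ℕ) := by
      intro z
      rw [hR]
      simp [eval_finset_sum]
    have hψ : ∀ z ∈ K, w z * ‖P.eval z‖ = wnorm K w P →
        0 < ((starRingEnd ℂ) (P.eval z) * R.eval z).re := by
      intro z hzK hzext
      have hzE : z ∈ E := ⟨hzK, hzext⟩
      have hfz : f (φf z) < u0 := hfa _ (subset_convexHull ℝ _ ⟨z, hzE, rfl⟩)
      have habs : (0:ℝ) < ‖P.eval z‖ := habsE z hzE
      have hσz : ((‖P.eval z‖):ℂ) * (starRingEnd ℂ) (σ z)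
          = (starRingEnd ℂ) (P.eval z) := by
        rw [hσ]
        simp only [map_div₀, Complex.conj_ofReal]
        rw [mul_div_cancel₀]
        simpa using (ne_of_gt habs)
      have hkey : ((starRingEnd ℂ) (P.eval z) * R.eval z)
          = -(‖P.eval z‖ : ℂ) * ∑ k, (starRingEnd ℂ) (c k) * (φf z k) := by
        rw [hReval]
        rw [mul_neg, neg_mul, neg_inj, Finset.mul_sum, Finset.mul_sum]
        refine Finset.sum_congr rfl fun k _ => ?_
        calc (starRingEnd ℂ) (P.eval z) * ((starRingEnd ℂ) (c k) * z^(k:ℕ))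
            = (starRingEnd ℂ) (c k) * (z^(k:ℕ) * ((‖P.eval z‖:ℂ)
                * (starRingEnd ℂ) (σ z))) := by rw [hσz]; ring
        _ = (‖P.eval z‖:ℂ) * ((starRingEnd ℂ) (c k) * (φf z k)) := by
            rw [hφf]; ring
      have hfrep : (∑ k, (starRingEnd ℂ) (c k) * (φf z k)).re = f (φf z) := (hc (φf z)).symm
      rw [hkey]
      have hre : (-(‖P.eval z‖ : ℂ) * ∑ k, (starRingEnd ℂ) (c k) * (φf z k)).re
          = -(‖P.eval z‖) * f (φf z) := by
        rw [neg_mul, Complex.neg_re, Complex.re_ofReal_mul, ← hfrep]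
        ring
      rw [hre]
      nlinarith
    obtain ⟨t, ht, himp⟩ := improve hK hKne hw0 hwb husc P R hM hψ
    have hdeglt : (Polynomial.C (t:ℂ) * R).degree < P.degree := by
      have h1 : (Polynomial.C (t:ℂ) * R).natDegree < n :=
        lt_of_le_of_lt (natDegree_C_mul_le _ _) hRdeg
      rw [Polynomial.degree_eq_natDegree hP0, hdeg]
      exact lt_of_le_of_lt degree_le_natDegree (by exact_mod_cast h1)
    have hQmonic : (P - Polynomial.C (t:ℂ) * R).Monic := by
      rw [sub_eq_add_neg]
      exact hmonic.add_of_left (by rwa [degree_neg])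
    have hQdeg : (P - Polynomial.C (t:ℂ) * R).natDegree = n := by
      rw [Polynomial.natDegree_sub_eq_left_of_natDegree_lt, hdeg]
      rw [hdeg]
      exact lt_of_le_of_lt (natDegree_C_mul_le _ _) hRdeg
    exact absurd (hopt _ hQmonic hQdeg) (not_le.2 himp)
  -- Carathéodory extraction
  obtain ⟨ι, hfin, zv, wv, hrange, hai, hposi, hsum1, hsum⟩ :=
    eq_pos_convex_span_of_mem_convexHull hclaim
  have him : ∀ i, ∃ x, x ∈ E ∧ φf x = zv i := fun i => hrange (Set.mem_range_self i)
  choose ζ hζE hζeq using him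
  have hζinj : Function.Injective ζ := fun i i' h => hai.injective (by rw [← hζeq, ← hζeq, h])
  -- moment conditions over ι
  have hmom : ∀ k : ℕ, (hk : k < n) →
      ∑ i : ι, (wv i : ℂ) * (ζ i)^k * (starRingEnd ℂ) (σ (ζ i)) = 0 := by
    intro k hk
    have h1 := congrFun hsum (⟨k, hk⟩ : Fin n)
    simp only [Finset.sum_apply, Pi.smul_apply, Pi.zero_apply] at h1
    rw [← h1]
    refine Finset.sum_congr rfl fun i _ => ?_
    rw [← hζeq i, hφf]
    simp only [Complex.real_smul]
    ring
  -- lower bound on the number of points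
  have hm1 : n + 1 ≤ Fintype.card ι := by
    by_contra hmn
    push_neg at hmn
    have hmn' : Fintype.card ι ≤ n := by omega
    have hne' : Nonempty ι := by
      rcases isEmpty_or_nonempty ι with h | h
      · simp at hsum1
      · exact h
    set RL := Lagrange.interpolate Finset.univ ζ (fun i => σ (ζ i)) with hRL
    have hinjon : Set.InjOn ζ ↑(Finset.univ : Finset ι) := hζinj.injOn
    have heval : ∀ i, RL.eval (ζ i) = σ (ζ i) := fun i =>
      Lagrange.eval_interpolate_at_node (fun i => σ (ζ i)) hinjon (Finset.mem_univ i)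
    have hRL0 : RL ≠ 0 := by
      intro h
      obtain ⟨i⟩ := hne'
      have := heval i
      rw [h, eval_zero] at this
      exact hσne (ζ i) (hζE i) this.symm
    have hdegRL : RL.natDegree < n := by
      have h1 := Lagrange.degree_interpolate_lt (fun i => σ (ζ i)) hinjon
      rw [Finset.card_univ] at h1
      rw [← Polynomial.natDegree_lt_iff_degree_lt hRL0] at h1
      omega
    have hone : ∑ i : ι, (wv i : ℂ) * (RL.eval (ζ i) * (starRingEnd ℂ) (σ (ζ i))) = 1 := by
      have h2 : ∀ i : ι, RL.eval (ζ i) * (starRingEnd ℂ) (σ (ζ i)) = 1 := by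
        intro i
        rw [heval i, Complex.mul_conj, Complex.normSq_eq_norm_sq, hσabs (ζ i) (hζE i)]
        norm_num
      rw [Finset.sum_congr rfl fun i _ => by rw [h2 i, mul_one]]
      rw [← Complex.ofReal_sum, hsum1, Complex.ofReal_one]
    have hzero : ∑ i : ι, (wv i : ℂ) * (RL.eval (ζ i) * (starRingEnd ℂ) (σ (ζ i))) = 0 := by
      have hexp : ∀ i : ι, (wv i : ℂ) * (RL.eval (ζ i) * (starRingEnd ℂ) (σ (ζ i)))
          = ∑ k ∈ Finset.range n, RL.coeff k
              * ((wv i : ℂ) * (ζ i)^k * (starRingEnd ℂ) (σ (ζ i))) := by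
        intro i
        rw [eval_eq_sum_range' hdegRL, Finset.sum_mul, Finset.mul_sum]
        refine Finset.sum_congr rfl fun k _ => ?_
        ring
      rw [Finset.sum_congr rfl fun i _ => hexp i, Finset.sum_comm]
      rw [Finset.sum_congr rfl fun k hk => ?_]
      · exact Finset.sum_const_zero
      · rw [← Finset.mul_sum, hmom k (Finset.mem_range.1 hk), mul_zero]
    rw [hone] at hzero
    exact one_ne_zero hzero
  have hm2 : Fintype.card ι ≤ 2*n + 1 := by
    have h1 := hai.card_le_finrank_succ
    have h2 : Module.finrank ℝ (vectorSpan ℝ (Set.range zv)) ≤ Module.finrank ℝ (Fin n → ℂ) :=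
      Submodule.finrank_le _
    have h3 : Module.finrank ℝ (Fin n → ℂ) = 2*n := by
      rw [Module.finrank_pi_fintype]
      simp [Complex.finrank_real_complex]
      ring
    omega
  -- assemble
  refine ⟨Fintype.card ι, hm1, hm2, ζ ∘ (Fintype.equivFin ι).symm,
    wv ∘ (Fintype.equivFin ι).symm, hζinj.comp (Fintype.equivFin ι).symm.injective,
    fun j => (hζE _), fun j => hposi _, ?_⟩
  intro k hk
  have h1 := hmom k hk
  rw [← Equiv.sum_comp (Fintype.equivFin ι).symm
    (fun i => (wv i : ℂ) * (ζ i)^k * (starRingEnd ℂ) (σ (ζ i)))] at h1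
  exact h1


theorem sufficiency (K : Set ℂ) (hK : IsCompact K) (n : ℕ) (w : ℂ → ℝ)
    (hw0 : ∀ z ∈ K, 0 ≤ w z) (hwb : BddAbove (w '' K))
    (hsupp : ∃ S : Finset ℂ, ↑S ⊆ K ∧ n + 1 ≤ S.card ∧ ∀ z ∈ S, w z ≠ 0)
    (P : Polynomial ℂ) (hmonic : P.Monic) (hdeg : P.natDegree = n)
    (m : ℕ) (hm1 : n + 1 ≤ m)
    (z : Fin m → ℂ) (lam : Fin m → ℝ)
    (hext : ∀ j, z j ∈ K ∧ w (z j) * ‖P.eval (z j)‖ = wnorm K w P)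
    (hpos : ∀ j, 0 < lam j)
    (hmom : ∀ k : ℕ, k < n →
      (∑ j, (lam j : ℂ) * (z j) ^ k *
        (starRingEnd ℂ) (P.eval (z j) / (‖P.eval (z j)‖ : ℂ))) = 0)
    (Q : Polynomial ℂ) (hQmonic : Q.Monic) (hQdeg : Q.natDegree = n) :
    wnorm K w P ≤ wnorm K w Q := by
  have hP0 : P ≠ 0 := hmonic.ne_zero
  have hM : 0 < wnorm K w P := wnorm_pos hK hw0 hwb hsupp hP0 hdeg
  by_cases hPQ : P = Q
  · rw [hPQ]
  rcases Nat.eq_zero_or_pos n with hn | hn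
  · exfalso
    apply hPQ
    rw [(Polynomial.Monic.natDegree_eq_zero hmonic).1 (hdeg.trans hn),
      (Polynomial.Monic.natDegree_eq_zero hQmonic).1 (hQdeg.trans hn)]
  -- facts about extremal points
  have hwj : ∀ j, 0 < w (z j) ∧ 0 < ‖P.eval (z j)‖ := by
    intro j
    obtain ⟨hjK, hjext⟩ := hext j
    have h1 : 0 ≤ w (z j) := hw0 _ hjK
    have h2 : 0 ≤ ‖P.eval (z j)‖ := norm_nonneg _
    constructor
    · rcases h1.lt_or_eq with h | h
      · exact h
      · exfalso; rw [← h, zero_mul] at hjext; linarith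
    · rcases h2.lt_or_eq with h | h
      · exact h
      · exfalso; rw [← h, mul_zero] at hjext; linarith
  -- difference polynomial
  set D := P - Q with hD
  have hD0 : D ≠ 0 := fun h => hPQ (sub_eq_zero.1 h)
  have hDdeg : D.natDegree < n := by
    have hle : D.natDegree ≤ n := le_trans (natDegree_sub_le _ _) (by rw [hdeg, hQdeg, max_self])
    rcases hle.lt_or_eq with h | h
    · exact h
    · exfalso
      have hcoeff : D.coeff n = 0 := by
        rw [hD, coeff_sub]
        have hp : P.coeff n = 1 := by rw [← hdeg]; exact hmonic.coeff_natDegree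
        have hq : Q.coeff n = 1 := by rw [← hQdeg]; exact hQmonic.coeff_natDegree
        rw [hp, hq, sub_self]
      have := Polynomial.leadingCoeff_ne_zero.2 hD0
      rw [Polynomial.leadingCoeff, h, hcoeff] at this
      exact this rfl
  -- the sign terms
  set c : Fin m → ℂ := fun j =>
    (starRingEnd ℂ) (P.eval (z j) / (‖P.eval (z j)‖ : ℂ)) with hc
  have hcabs : ∀ j, ‖c j‖ = 1 := by
    intro j
    rw [hc]
    rw [Complex.norm_conj, norm_div, Complex.norm_real, Real.norm_eq_abs, abs_of_pos (hwj j).2,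
      div_self (ne_of_gt (hwj j).2)]
  -- moment condition applied to D
  have hmomD : ∑ j, (lam j : ℂ) * D.eval (z j) * c j = 0 := by
    have hexp : ∀ j, (lam j : ℂ) * D.eval (z j) * c j
        = ∑ k ∈ Finset.range n, D.coeff k * ((lam j : ℂ) * (z j)^k * c j) := by
      intro j
      rw [eval_eq_sum_range' hDdeg, Finset.mul_sum, Finset.sum_mul]
      exact Finset.sum_congr rfl fun k _ => by ring
    rw [Finset.sum_congr rfl fun j _ => hexp j, Finset.sum_comm]
    rw [Finset.sum_congr rfl fun k hk => ?_]
    · exact Finset.sum_const_zero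
    · rw [← Finset.mul_sum, hmom k (Finset.mem_range.1 hk), mul_zero]
  have heqPQ : ∑ j, (lam j : ℂ) * P.eval (z j) * c j
      = ∑ j, (lam j : ℂ) * Q.eval (z j) * c j := by
    rw [← sub_eq_zero, ← Finset.sum_sub_distrib]
    rw [← hmomD]
    refine Finset.sum_congr rfl fun j _ => ?_
    rw [hD, eval_sub]
    ring
  -- LHS is real
  have hterm : ∀ j, P.eval (z j) * c j = ((‖P.eval (z j)‖ : ℝ) : ℂ) := by
    intro j
    rw [hc]
    simp only [map_div₀, Complex.conj_ofReal]
    rw [mul_div_assoc', Complex.mul_conj, Complex.normSq_eq_norm_sq]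
    rw [div_eq_iff (by simpa using (ne_of_gt (hwj j).2) : ((‖P.eval (z j)‖ : ℂ) ≠ 0))]
    push_cast
    ring
  have hLHS : ∑ j, (lam j : ℂ) * P.eval (z j) * c j
      = ((∑ j, lam j * ‖P.eval (z j)‖ : ℝ) : ℂ) := by
    push_cast
    refine Finset.sum_congr rfl fun j _ => ?_
    rw [mul_assoc, hterm j]
  -- triangle inequality
  have htri : ∑ j, lam j * ‖P.eval (z j)‖ ≤ ∑ j, lam j * ‖Q.eval (z j)‖ := by
    have h1 : (∑ j, lam j * ‖P.eval (z j)‖)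
        = ‖∑ j, (lam j : ℂ) * Q.eval (z j) * c j‖ := by
      rw [← heqPQ, hLHS, Complex.norm_real, Real.norm_eq_abs]
      exact (abs_of_nonneg (Finset.sum_nonneg fun j _ =>
        mul_nonneg (hpos j).le (norm_nonneg _))).symm
    rw [h1]
    refine le_trans (norm_sum_le _ _) ?_
    refine Finset.sum_le_sum fun j _ => ?_
    rw [norm_mul, norm_mul, Complex.norm_real, Real.norm_eq_abs, hcabs j, mul_one, abs_of_pos (hpos j)]
  -- compare with weights
  have hPval : ∀ j, ‖P.eval (z j)‖ = wnorm K w P / w (z j) := by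
    intro j
    rw [eq_div_iff (ne_of_gt (hwj j).1)]
    rw [mul_comm]
    exact (hext j).2
  have hQval : ∀ j, ‖Q.eval (z j)‖ ≤ wnorm K w Q / w (z j) := by
    intro j
    rw [le_div_iff₀ (hwj j).1, mul_comm]
    exact le_wnorm hK hwb Q (hext j).1
  have hs : 0 < ∑ j, lam j / w (z j) := by
    apply Finset.sum_pos
    · intro j _
      exact div_pos (hpos j) (hwj j).1
    · haveI : Nonempty (Fin m) := ⟨⟨0, by omega⟩⟩
      exact Finset.univ_nonempty
  have hMs : wnorm K w P * (∑ j, lam j / w (z j)) ≤ wnorm K w Q * (∑ j, lam j / w (z j)) := by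
    rw [Finset.mul_sum, Finset.mul_sum]
    calc ∑ j, wnorm K w P * (lam j / w (z j))
        = ∑ j, lam j * ‖P.eval (z j)‖ := by
          refine Finset.sum_congr rfl fun j _ => ?_
          rw [hPval j]
          field_simp
    _ ≤ ∑ j, lam j * ‖Q.eval (z j)‖ := htri
    _ ≤ ∑ j, wnorm K w Q * (lam j / w (z j)) := by
          refine Finset.sum_le_sum fun j _ => ?_
          calc lam j * ‖Q.eval (z j)‖
              ≤ lam j * (wnorm K w Q / w (z j)) :=
                mul_le_mul_of_nonneg_left (hQval j) (hpos j).le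
          _ = wnorm K w Q * (lam j / w (z j)) := by ring
  exact le_of_mul_le_mul_right hMs hs


/-- Rivlin–Shapiro criterion, sign form: `P_n` is the weighted Chebyshev polynomial iff there
are `n+1 ≤ m ≤ 2n+1` `w`-extremal points `z₁,…,z_m` and positive numbers `λ₁,…,λ_m` with
`∑ λ_j z_j^k conj(sgn P_n(z_j)) = 0` for `k = 0,…,n-1`, where `sgn z = z/|z|`. -/
theorem stmt12 (K : Set ℂ) (hK : IsCompact K) (n : ℕ) (w : ℂ → ℝ)
    (hw0 : ∀ z ∈ K, 0 ≤ w z) (hwb : BddAbove (w '' K))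
    (husc : UpperSemicontinuousOn w K)
    (hsupp : ∃ S : Finset ℂ, ↑S ⊆ K ∧ n + 1 ≤ S.card ∧ ∀ z ∈ S, w z ≠ 0)
    (P : Polynomial ℂ) (hmonic : P.Monic) (hdeg : P.natDegree = n) :
    (∀ Q : Polynomial ℂ, Q.Monic → Q.natDegree = n → wnorm K w P ≤ wnorm K w Q) ↔
      ∃ (m : ℕ), n + 1 ≤ m ∧ m ≤ 2 * n + 1 ∧
        ∃ (z : Fin m → ℂ) (lam : Fin m → ℝ),
          Function.Injective z ∧
          (∀ j, z j ∈ K ∧ w (z j) * ‖P.eval (z j)‖ = wnorm K w P) ∧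
          (∀ j, 0 < lam j) ∧
          ∀ k : ℕ, k < n →
            (∑ j, (lam j : ℂ) * (z j) ^ k *
              (starRingEnd ℂ) (P.eval (z j) / (‖P.eval (z j)‖ : ℂ))) = 0 := by
  constructor
  · intro hopt
    exact necessity K hK n w hw0 hwb husc hsupp P hmonic hdeg hopt
  · rintro ⟨m, hm1, hm2, z, lam, hinj, hext, hpos, hmom⟩ Q hQm hQd
    exact sufficiency K hK n w hw0 hwb hsupp P hmonic hdeg m hm1 z lam hext hpos hmom Q hQm hQd
end

section
/- Let p be a polynomial over ℂ of degree m ≥ 1 and let q be a polynomial over ℂ of degree at most nm − 1, where n ≥ 1. For each ζ ∈ ℂ, let z₁(ζ), …, z_m(ζ) denote the m roots of the polynomial p(z) − ζ counted with multiplicity, and set S(ζ) = q(z₁(ζ)) + ⋯ + q(z_m(ζ)). Then S coincides with a polynomial in ζ of degree at most n − 1. -/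
open Polynomial Metric Set


/-- Newton's identity for multisets. -/
lemma multiset_newton (s : Multiset ℂ) (k : ℕ) (hk : 0 < k) :
    (s.map (· ^ k)).sum = (-1) ^ (k + 1) * (k : ℂ) * s.esymm k -
      ∑ a ∈ (Finset.HasAntidiagonal.antidiagonal k).filter (fun a => a.1 ∈ Set.Ioo 0 k),
        (-1) ^ a.1 * s.esymm a.1 * (s.map (· ^ a.2)).sum := by
  obtain ⟨l, rfl⟩ : ∃ l : List ℂ, (l : Multiset ℂ) = s := s.exists_rep
  have key := congrArg (MvPolynomial.aeval l.get)
    (MvPolynomial.psum_eq_mul_esymm_sub_sum (Fin l.length) ℂ k hk)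
  have huniv : (Finset.univ.val.map l.get) = (l : Multiset ℂ) := by
    have := List.map_get_finRange l
    simp only [Finset.univ, Fintype.elems]
    show ((List.finRange l.length : Multiset (Fin l.length)).map l.get) = _
    rw [Multiset.map_coe, List.map_get_finRange]
  have hes : ∀ i, MvPolynomial.aeval l.get (MvPolynomial.esymm (Fin l.length) ℂ i)
      = (l : Multiset ℂ).esymm i := by
    intro i
    rw [MvPolynomial.aeval_esymm_eq_multiset_esymm, huniv]
  have hps : ∀ i, MvPolynomial.aeval l.get (MvPolynomial.psum (Fin l.length) ℂ i)
      = ((l : Multiset ℂ).map (· ^ i)).sum := by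
    intro i
    rw [MvPolynomial.psum, map_sum]
    simp only [map_pow, MvPolynomial.aeval_X]
    rw [← huniv, Multiset.map_map]
    rfl
  simp only [map_sub, map_mul, map_sum, map_pow, map_neg, map_one, map_natCast, hes, hps] at key
  exact key

section
variable (p : Polynomial ℂ) (m : ℕ)

/-- Elementary symmetric functions of roots of `p - C ζ` as polynomials in `ζ`. -/
noncomputable def Epoly (i : ℕ) : Polynomial ℂ :=
  Polynomial.C ((-1) ^ i / p.leadingCoeff) *
    (if i = m then Polynomial.C (p.coeff 0) - Polynomial.X
     else if i < m then Polynomial.C (p.coeff (m - i)) else 0)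

lemma Epoly_degree (i : ℕ) : (Epoly p m i).degree ≤ (if i = m then 1 else 0 : ℕ) := by
  unfold Epoly
  split_ifs with h1 h2
  · refine le_trans (degree_mul_le _ _) ?_
    simp only [degree_C_le, Nat.cast_one]
    calc _ ≤ (0 : WithBot ℕ) + (Polynomial.C (p.coeff 0) - Polynomial.X).degree :=
          add_le_add degree_C_le le_rfl
      _ ≤ 0 + 1 := by
          refine add_le_add le_rfl (le_trans (degree_sub_le _ _) ?_)
          simp [degree_X, degree_C_le]
          exact le_trans degree_C_le (by norm_num)
      _ = 1 := by norm_num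
  · exact le_trans (degree_mul_le _ _) (by simpa using add_le_add degree_C_le degree_C_le)
  · simp

lemma Epoly_eval (hm : 1 ≤ m) (hpdeg : p.natDegree = m) (ζ : ℂ) (i : ℕ) :
    (Epoly p m i).eval ζ = ((p - Polynomial.C ζ).roots).esymm i := by
  have hp0 : p ≠ 0 := fun h => by simp [h] at hpdeg; omega
  have ha : p.leadingCoeff ≠ 0 := leadingCoeff_ne_zero.2 hp0
  set f := p - Polynomial.C ζ with hf
  have hfdeg : f.natDegree = m := by rw [hf, natDegree_sub_C, hpdeg]
  have hf0 : f ≠ 0 := fun h => by simp [h] at hfdeg; omega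
  have hcard : Multiset.card f.roots = f.natDegree :=
    splits_iff_card_roots.1 (IsAlgClosed.splits f)
  have hlead : f.leadingCoeff = p.leadingCoeff := by
    rw [leadingCoeff, hfdeg, ← hpdeg, leadingCoeff, hf, coeff_sub, coeff_C,
      if_neg (by omega : ¬ p.natDegree = 0), sub_zero]
  by_cases him : i ≤ m
  · have := Polynomial.coeff_eq_esymm_roots_of_card hcard
      (k := m - i) (by rw [hfdeg]; omega)
    rw [hfdeg, hlead] at this
    have hmi : m - (m - i) = i := by omega
    rw [hmi] at this
    -- this : f.coeff (m - i) = p.leadingCoeff * (-1) ^ i * f.roots.esymm i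
    have : f.roots.esymm i = (-1) ^ i / p.leadingCoeff * f.coeff (m - i) := by
      rw [this]
      field_simp
      ring_nf
      rw [mul_comm i 2, pow_mul]
      norm_num
    rw [this]
    unfold Epoly
    rcases eq_or_lt_of_le him with h | h
    · subst h
      rw [if_pos rfl]
      simp [hf, coeff_sub, coeff_C, Nat.sub_self]
    · rw [if_neg (by omega), if_pos h]
      simp only [eval_mul, eval_C, eval_sub, eval_X]
      rw [hf, coeff_sub, coeff_C, if_neg (by omega : ¬ m - i = 0), sub_zero]
  · have : f.roots.esymm i = 0 := by
      rw [Multiset.esymm, Multiset.powersetCard_eq_empty i (by rw [hcard, hfdeg]; omega)]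
      simp
    rw [this]
    unfold Epoly
    rw [if_neg (by omega), if_neg (by omega)]
    simp

end

/-- Power sums of roots as polynomials in `ζ`, defined via Newton's recursion. -/
noncomputable def NP (m : ℕ) (E : ℕ → Polynomial ℂ) : ℕ → Polynomial ℂ
  | 0 => Polynomial.C (m : ℂ)
  | (k+1) =>
    Polynomial.C ((-1) ^ (k + 2) * ((k : ℂ) + 1)) * E (k + 1)
      - ∑ j ∈ (Finset.Ioo 0 (k+1)).attach,
          (-1 : Polynomial ℂ) ^ (j : ℕ) * E (j : ℕ) * NP m E (k + 1 - (j : ℕ))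
  decreasing_by
    have := j.2
    rw [Finset.mem_Ioo] at this
    omega

lemma NP_degree (m : ℕ) (hm : 1 ≤ m) (E : ℕ → Polynomial ℂ)
    (hE : ∀ i, (E i).degree ≤ (if i = m then 1 else 0 : ℕ)) :
    ∀ k, (NP m E k).degree ≤ (k / m : ℕ) := by
  intro k
  induction k using Nat.strong_induction_on with
  | _ k ih =>
    match k with
    | 0 => simpa [NP] using degree_C_le (a := (m : ℂ))
    | (k+1) =>
      rw [NP]
      refine le_trans (degree_sub_le _ _) (max_le ?_ ?_)
      · refine le_trans (degree_mul_le _ _) ?_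
        refine le_trans (add_le_add degree_C_le (hE (k+1))) ?_
        rw [zero_add]
        by_cases h : k + 1 = m
        · rw [if_pos h, h, Nat.div_self (by omega)]
        · rw [if_neg h]
          exact_mod_cast Nat.cast_le.2 (Nat.zero_le _)
      · refine le_trans (degree_sum_le _ _) ?_
        refine Finset.sup_le fun j _ => ?_
        have hj := j.2
        rw [Finset.mem_Ioo] at hj
        refine le_trans (degree_mul_le _ _) ?_
        refine le_trans (add_le_add (le_trans (degree_mul_le _ _)
          (add_le_add (le_trans (degree_pow_le _ _) (by simp [degree_neg]; exact le_refl (0:WithBot ℕ))) (hE j)))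
          (ih (k + 1 - (j : ℕ)) (by omega))) ?_
        rw [zero_add]
        by_cases h : (j : ℕ) = m
        · rw [if_pos h]
          have : (k + 1 - (j : ℕ)) / m + 1 = (k + 1) / m := by
            rw [← Nat.add_div_right _ (by omega : 0 < m)]
            congr 1
            omega
          rw [← this]
          norm_cast
          omega
        · rw [if_neg h]
          norm_cast
          rw [Nat.zero_add]; exact Nat.div_le_div_right (Nat.sub_le _ _)

lemma NP_eval (m : ℕ) (E : ℕ → Polynomial ℂ) (ζ : ℂ) (s : Multiset ℂ)
    (hcard : Multiset.card s = m) (hE : ∀ i, (E i).eval ζ = s.esymm i)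
    (newton : ∀ k : ℕ, 0 < k → (s.map (· ^ k)).sum = (-1) ^ (k + 1) * (k : ℂ) * s.esymm k -
      ∑ a ∈ (Finset.HasAntidiagonal.antidiagonal k).filter (fun a => a.1 ∈ Set.Ioo 0 k),
        (-1) ^ a.1 * s.esymm a.1 * (s.map (· ^ a.2)).sum) :
    ∀ k, (NP m E k).eval ζ = (s.map (· ^ k)).sum := by
  intro k
  induction k using Nat.strong_induction_on with
  | _ k ih =>
    match k with
    | 0 => simp [NP, hcard, Multiset.sum_replicate]
    | (k+1) =>
      rw [NP, newton (k+1) (by omega)]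
      simp only [eval_sub, eval_mul, eval_C, eval_finset_sum, eval_pow, eval_neg, eval_one]
      congr 1
      · rw [hE]; push_cast; ring
      · rw [Finset.sum_attach ((Finset.Ioo 0 (k+1)))
          (fun j => (-1 : ℂ) ^ j * (E j).eval ζ * (NP m E (k + 1 - j)).eval ζ)]
        refine (Finset.sum_nbij' (i := fun (a : ℕ × ℕ) => a.1)
          (j := fun (j : ℕ) => (j, k + 1 - j)) ?_ ?_ ?_ ?_ ?_).symm
        · intro a ha
          rw [Finset.mem_filter] at ha
          rw [Finset.mem_Ioo]
          exact ha.2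
        · intro j hj
          rw [Finset.mem_Ioo] at hj
          simp only [Finset.mem_filter, Finset.HasAntidiagonal.mem_antidiagonal, Set.mem_Ioo]
          refine ⟨by omega, by omega, by omega⟩
        · intro a ha
          rw [Finset.mem_filter, Finset.HasAntidiagonal.mem_antidiagonal] at ha
          ext <;> simp <;> omega
        · intro j hj
          simp
        · intro a ha
          rw [Finset.mem_filter, Finset.HasAntidiagonal.mem_antidiagonal, Set.mem_Ioo] at ha
          obtain ⟨hsum, h0, hlt⟩ := ha
          have h2 : a.2 = k + 1 - a.1 := by omega
          rw [ih (k + 1 - a.1) (by omega), hE, ← h2]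
      done

lemma multiset_sum_swap {α : Type*} (s : Multiset ℂ) (t : Finset α) (g : α → ℂ → ℂ) :
    (s.map (fun z => ∑ k ∈ t, g k z)).sum = ∑ k ∈ t, (s.map (g k)).sum := by
  induction s using Multiset.induction with
  | empty => simp
  | cons a s ih => simp [ih, Finset.sum_add_distrib]

/-- Sums of values of `q` over the roots (with multiplicity) of `p(z) - ζ` define a polynomial
in `ζ` of degree at most `n - 1` whenever `deg q ≤ nm - 1`. -/
theorem stmt13 (p q : Polynomial ℂ) (m n : ℕ) (hm : 1 ≤ m) (hn : 1 ≤ n)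
    (hpdeg : p.natDegree = m) (hqdeg : q.degree ≤ (n * m - 1 : ℕ)) :
    ∃ S : Polynomial ℂ, S.degree ≤ (n - 1 : ℕ) ∧
      ∀ ζ : ℂ, S.eval ζ = (((p - Polynomial.C ζ).roots).map (fun z => q.eval z)).sum := by
  have hnm : 1 ≤ n * m := Nat.one_le_iff_ne_zero.2 (by positivity)
  have hqnat : q.natDegree < n * m := by
    by_cases hq0 : q = 0
    · simp [hq0]; omega
    · have := (Polynomial.natDegree_le_iff_degree_le (n := n * m - 1)).2 hqdeg
      omega
  refine ⟨∑ k ∈ Finset.range (n * m), Polynomial.C (q.coeff k) * NP m (Epoly p m) k, ?_, ?_⟩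
  · refine le_trans (Polynomial.degree_sum_le _ _) (Finset.sup_le fun k hk => ?_)
    rw [Finset.mem_range] at hk
    refine le_trans (degree_mul_le _ _) ?_
    refine le_trans (add_le_add degree_C_le (NP_degree m hm _ (Epoly_degree p m) k)) ?_
    rw [zero_add]
    have : k / m < n := (Nat.div_lt_iff_lt_mul (by omega)).2 (by omega)
    exact_mod_cast Nat.cast_le.2 (by omega : k / m ≤ n - 1)
  · intro ζ
    set s := (p - Polynomial.C ζ).roots with hs
    have hfdeg : (p - Polynomial.C ζ).natDegree = m := by rw [natDegree_sub_C, hpdeg]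
    have hcard : Multiset.card s = m := by
      rw [hs, splits_iff_card_roots.1 (IsAlgClosed.splits _), hfdeg]
    have hNP := NP_eval m (Epoly p m) ζ s hcard (Epoly_eval p m hm hpdeg ζ)
      (fun k hk => multiset_newton s k hk)
    simp only [eval_finset_sum, eval_mul, eval_C, hNP]
    have hqeval : ∀ z : ℂ, q.eval z = ∑ k ∈ Finset.range (n * m), q.coeff k * z ^ k :=
      fun z => Polynomial.eval_eq_sum_range' hqnat z
    calc ∑ k ∈ Finset.range (n * m), q.coeff k * (s.map (· ^ k)).sum
        = ∑ k ∈ Finset.range (n * m), (s.map (fun z => q.coeff k * z ^ k)).sum := by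
          refine Finset.sum_congr rfl fun k _ => ?_
          rw [← Multiset.sum_map_mul_left]
      _ = (s.map (fun z => ∑ k ∈ Finset.range (n * m), q.coeff k * z ^ k)).sum :=
          (multiset_sum_swap s _ _).symm
      _ = (s.map (fun z => q.eval z)).sum := by
          congr 1
          exact Multiset.map_congr rfl fun z _ => (hqeval z).symm
end

section
/- (Invariance of Chebyshev norms under polynomial preimages) Let L ⊂ ℂ be a compact set containing at least n+1 points, w_L : L → [0,∞) a bounded upper semicontinuous function nonzero at at least n+1 points of L, and p(z) = a_m z^m + ⋯ + a₀ a polynomial of degree m ≥ 1 with a_m ≠ 0. Define K = p⁻¹(L) and w_K : K → [0,∞) by w_K(z) = w_L(p(z)). Then t_{nm}(K, w_K) = t_n(L, w_L) / |a_m|^n, where t_k(E, v) denotes the minimal value of sup_{z∈E} v(z)|P(z)| over monic polynomials P of degree k. -/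
open Polynomial Metric Set

/-- The weighted Chebyshev number `t_k(E,v) = inf { ‖P‖_{E,v} : P monic of degree k }`. -/
noncomputable def tcheb (E : Set ℂ) (v : ℂ → ℝ) (k : ℕ) : ℝ :=
  sInf {r : ℝ | ∃ P : Polynomial ℂ, P.Monic ∧ P.natDegree = k ∧ r = wnorm E v P}

namespace ChebAux

open Finset

/-- Sum of `c.eval` over the roots of `f - C w`. -/
noncomputable def S (f : Polynomial ℂ) (w : ℂ) (c : Polynomial ℂ) : ℂ :=
  (((f - C w).roots).map (fun y => c.eval y)).sum

variable {f : Polynomial ℂ} {m : ℕ}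

lemma fw_monic (hf : f.Monic) (hm : 1 ≤ m) (hdeg : f.natDegree = m) (w : ℂ) :
    (f - C w).Monic := by
  have h : f - C w = f + C (-w) := by rw [map_neg]; ring
  rw [h]
  refine hf.add_of_left (lt_of_le_of_lt (degree_C_le) ?_)
  rw [degree_eq_natDegree hf.ne_zero, hdeg]
  exact_mod_cast Nat.lt_of_lt_of_le Nat.zero_lt_one hm

lemma fw_natDegree (hf : f.Monic) (hm : 1 ≤ m) (hdeg : f.natDegree = m) (w : ℂ) :
    (f - C w).natDegree = m := by
  have h0 : 0 < f.degree := by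
    rw [degree_eq_natDegree hf.ne_zero, hdeg]
    exact_mod_cast Nat.lt_of_lt_of_le Nat.zero_lt_one hm
  have h := degree_sub_C h0 (a := w)
  rw [← hdeg]
  exact natDegree_eq_of_degree_eq h

lemma fw_card (hf : f.Monic) (hm : 1 ≤ m) (hdeg : f.natDegree = m) (w : ℂ) :
    Multiset.card (f - C w).roots = m := by
  rw [← fw_natDegree hf hm hdeg w]
  exact splits_iff_card_roots.mp (IsAlgClosed.splits _)

lemma mem_roots_iff (hf : f.Monic) (hm : 1 ≤ m) (hdeg : f.natDegree = m) (w y : ℂ) :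
    y ∈ (f - C w).roots ↔ f.eval y = w := by
  rw [mem_roots (fw_monic hf hm hdeg w).ne_zero]
  simp [IsRoot, sub_eq_zero]

lemma S_add (w : ℂ) (c₁ c₂ : Polynomial ℂ) : S f w (c₁ + c₂) = S f w c₁ + S f w c₂ := by
  simp [S, Multiset.sum_map_add]

lemma S_smul (w k : ℂ) (c : Polynomial ℂ) : S f w (C k * c) = k * S f w c := by
  simp [S, Multiset.sum_map_mul_left]

lemma S_one (hf : f.Monic) (hm : 1 ≤ m) (hdeg : f.natDegree = m) (w : ℂ) :
    S f w 1 = (m : ℂ) := by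
  simp [S, Multiset.map_const', fw_card hf hm hdeg w]


/-- `qq f m y = (f(X) - f(y))/(X - y)` written explicitly. -/
noncomputable def qq (f : Polynomial ℂ) (m : ℕ) (y : ℂ) : Polynomial ℂ :=
  ∑ d ∈ range (m + 1), C (f.coeff d) * ∑ i ∈ range d, X ^ i * C (y ^ (d - 1 - i))

lemma qq_mul (hdeg : f.natDegree = m) (y : ℂ) :
    qq f m y * (X - C y) = f - C (f.eval y) := by
  rw [qq, Finset.sum_mul]
  have h : ∀ d ∈ range (m + 1),
      (C (f.coeff d) * ∑ i ∈ range d, X ^ i * C (y ^ (d - 1 - i))) * (X - C y)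
        = C (f.coeff d) * X ^ d - C (f.coeff d) * C (y ^ d) := by
    intro d _
    rw [mul_assoc, ← mul_sub]
    congr 1
    have hg := geom_sum₂_mul (X : Polynomial ℂ) (C y) d
    simp only [← C_pow] at hg
    rw [← hg]
  rw [Finset.sum_congr rfl h, Finset.sum_sub_distrib]
  congr 1
  · conv_rhs => rw [f.as_sum_range' (m + 1) (by omega)]
    exact Finset.sum_congr rfl fun d _ => by rw [C_mul_X_pow_eq_monomial]
  · rw [eval_eq_sum_range' (n := m + 1) (by omega) y, map_sum]
    exact Finset.sum_congr rfl fun d _ => by rw [map_mul, C_pow]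

/-- coefficient polynomials of `qq` as polynomials in `y`. -/
noncomputable def rho (f : Polynomial ℂ) (m i : ℕ) : Polynomial ℂ :=
  ∑ d ∈ range (m + 1), if i < d then C (f.coeff d) * X ^ (d - 1 - i) else 0

lemma qq_coeff (y : ℂ) (i : ℕ) : (qq f m y).coeff i = (rho f m i).eval y := by
  simp only [qq, rho, finset_sum_coeff, eval_finset_sum]
  refine Finset.sum_congr rfl fun d _ => ?_
  rw [coeff_C_mul]
  have h1 : (∑ j ∈ range d, X ^ j * C (y ^ (d - 1 - j))).coeff i
      = if i < d then y ^ (d - 1 - i) else 0 := by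
    rw [finset_sum_coeff]
    have h2 : ∀ j ∈ range d, (X ^ j * C (y ^ (d - 1 - j))).coeff i
        = if j = i then y ^ (d - 1 - j) else 0 := by
      intro j _
      rw [mul_comm, coeff_C_mul, coeff_X_pow]
      by_cases hji : i = j <;> simp [hji, eq_comm]
    rw [Finset.sum_congr rfl h2, Finset.sum_ite_eq' (range d) i fun j => y ^ (d - 1 - j)]
    simp [Finset.mem_range]
  rw [h1]
  by_cases hid : i < d <;> simp [hid]


lemma S_rho (hf : f.Monic) (hm : 1 ≤ m) (hdeg : f.natDegree = m) (w : ℂ) (i : ℕ) :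
    S f w (rho f m i) = (derivative f).coeff i := by
  classical
  have hc := fw_card hf hm hdeg w
  have hsplit : (Multiset.map (fun a => X - C a) (f - C w).roots).prod = f - C w :=
    prod_multiset_X_sub_C_of_monic_of_roots_card_eq (fw_monic hf hm hdeg w)
      (by rw [hc, fw_natDegree hf hm hdeg w])
  have hF : derivative f = derivative (f - C w) := by simp
  have hD : derivative (f - C w) =
      ((f - C w).roots.map (fun y =>
        (((f - C w).roots.erase y).map (fun z => X - C z)).prod * derivative (X - C y))).sum := by
    conv_lhs => rw [← hsplit]
    exact derivative_prod
  have hqq : ∀ y ∈ (f - C w).roots,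
      (((f - C w).roots.erase y).map (fun z => X - C z)).prod * derivative (X - C y) = qq f m y := by
    intro y hy
    have hyv : f.eval y = w := (mem_roots_iff hf hm hdeg w y).mp hy
    have h1 := Multiset.prod_map_erase (f := fun z => X - C z) (a := y) hy
    rw [hsplit] at h1
    have h2 : qq f m y * (X - C y) = f - C w := by rw [qq_mul hdeg y, hyv]
    have h3 : (X - C y) * (((f - C w).roots.erase y).map (fun z => X - C z)).prod
        = (X - C y) * qq f m y := by rw [h1, ← h2, mul_comm]
    have h4 := mul_left_cancel₀ (X_sub_C_ne_zero y) h3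
    simp [h4]
  have hD2 : derivative f = ((f - C w).roots.map (fun y => qq f m y)).sum := by
    rw [hF, hD]
    congr 1
    exact Multiset.map_congr rfl hqq
  have := congrArg (fun g => Polynomial.coeff g i) hD2
  rw [this]
  rw [show ((((f - C w).roots.map (fun y => qq f m y)).sum).coeff i)
      = (((f - C w).roots.map (fun y => qq f m y)).map (fun g => g.coeff i)).sum from
    map_multiset_sum (Polynomial.lcoeff ℂ i) _]
  rw [Multiset.map_map, S]
  congr 1
  exact Multiset.map_congr rfl fun y _ => by simpa using (qq_coeff (f := f) (m := m) y i).symm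

lemma rho_natDegree_le (hf : f.Monic) (i : ℕ) : (rho f m i).natDegree ≤ m - 1 - i := by
  refine natDegree_sum_le_of_forall_le _ _ fun d hd => ?_
  by_cases hid : i < d
  · simp only [hid, if_true]
    refine le_trans (natDegree_C_mul_le _ _) ?_
    rw [natDegree_X_pow]
    have := Finset.mem_range.mp hd
    omega
  · simp [hid]

lemma rho_coeff_top (hf : f.Monic) (hm : 1 ≤ m) (hdeg : f.natDegree = m) {i : ℕ}
    (hi : i ≤ m - 1) : (rho f m i).coeff (m - 1 - i) = 1 := by
  rw [rho, finset_sum_coeff]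
  have him : i < m := by omega
  rw [Finset.sum_range_succ]
  have h0 : ∀ d ∈ range m, (if i < d then C (f.coeff d) * X ^ (d - 1 - i) else 0).coeff (m - 1 - i) = 0 := by
    intro d hd
    have hdm := Finset.mem_range.mp hd
    by_cases hid : i < d
    · simp only [hid, if_true, coeff_C_mul, coeff_X_pow]
      have : ¬ (m - 1 - i = d - 1 - i) := by omega
      simp [this]
    · simp [hid]
  rw [Finset.sum_congr rfl h0]
  have hfm : f.coeff m = 1 := by rw [← hdeg]; exact hf.coeff_natDegree
  simp [him, hfm, coeff_X_pow]

lemma S_const (hf : f.Monic) (hm : 1 ≤ m) (hdeg : f.natDegree = m)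
    {c : Polynomial ℂ} (hc : c.natDegree ≤ m - 1) (w : ℂ) : S f w c = S f 0 c := by
  have key : ∀ N : ℕ, ∀ c : Polynomial ℂ, c.natDegree ≤ N → c.natDegree ≤ m - 1 →
      S f w c = S f 0 c := by
    intro N
    induction N with
    | zero =>
      intro c hc0 hcm
      have hcC : c = C (c.coeff 0) := (eq_C_of_natDegree_le_zero hc0)
      have hrho1 : rho f m (m - 1) = 1 := by
        have h1 : (rho f m (m - 1)).natDegree ≤ 0 := by
          have := rho_natDegree_le (m := m) hf (m - 1)
          omega
        have h2 : (rho f m (m - 1)).coeff 0 = 1 := by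
          have := rho_coeff_top hf hm hdeg (i := m - 1) le_rfl
          simpa using this
        rw [eq_C_of_natDegree_le_zero h1, h2, map_one]
      have hrw : c = C (c.coeff 0) * rho f m (m - 1) := by rw [hrho1, mul_one, ← hcC]
      rw [hrw, S_smul, S_smul, S_rho hf hm hdeg, S_rho hf hm hdeg]
    | succ N ih =>
      intro c hc0 hcm
      by_cases hle : c.natDegree ≤ N
      · exact ih c hle hcm
      · have he : c.natDegree = N + 1 := by omega
        set i := m - 1 - c.natDegree with hi
        have him : m - 1 - i = c.natDegree := by omega
        set c' := c - C c.leadingCoeff * rho f m i with hc'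
        have hdegrho : (C c.leadingCoeff * rho f m i).natDegree ≤ c.natDegree := by
          refine le_trans (natDegree_C_mul_le _ _) ?_
          have := rho_natDegree_le (m := m) hf i
          omega
        have h1 : c'.natDegree ≤ c.natDegree :=
          le_trans (natDegree_sub_le _ _) (by omega)
        have hcoeff : c'.coeff c.natDegree = 0 := by
          have hr1 : (rho f m i).coeff c.natDegree = 1 := by
            rw [← him]; exact rho_coeff_top hf hm hdeg (by omega)
          rw [hc', coeff_sub, coeff_C_mul, hr1, mul_one, Polynomial.leadingCoeff, sub_self]
        have hdeg' : c'.natDegree ≤ N := by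
          rcases eq_or_ne c' 0 with h0 | h0
          · simp [h0]
          · have : c'.natDegree ≠ c.natDegree := by
              intro heq
              have := Polynomial.leadingCoeff_ne_zero.mpr h0
              rw [Polynomial.leadingCoeff, heq] at this
              exact this hcoeff
            omega
        have hcm' : c'.natDegree ≤ m - 1 := by omega
        have hS' := ih c' hdeg' hcm'
        have hdecomp : c = c' + C c.leadingCoeff * rho f m i := by rw [hc']; ring
        rw [hdecomp, S_add, S_add, S_smul, S_smul, S_rho hf hm hdeg, S_rho hf hm hdeg, hS']
  exact key c.natDegree c le_rfl hc

/-- base-`f` digits -/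
noncomputable def ex (f : Polynomial ℂ) : ℕ → Polynomial ℂ → Polynomial ℂ
  | 0, P => P %ₘ f
  | (i + 1), P => ex f i (P /ₘ f)

section
variable {f : Polynomial ℂ} {m : ℕ}

lemma ex_natDegree_le (hf : f.Monic) (hm : 1 ≤ m) (hdeg : f.natDegree = m) :
    ∀ (i : ℕ) (P : Polynomial ℂ), (ex f i P).natDegree ≤ m - 1 := by
  intro i
  induction i with
  | zero =>
    intro P
    have h := degree_modByMonic_lt P hf
    rcases eq_or_ne (P %ₘ f) 0 with h0 | h0
    · simp [ex, h0]
    · have h2 : (P %ₘ f).natDegree < f.natDegree := by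
        have := (natDegree_lt_natDegree_iff h0).mpr h
        exact this
      rw [hdeg] at h2
      show (P %ₘ f).natDegree ≤ m - 1
      omega
  | succ i ih => intro P; exact ih (P /ₘ f)

lemma ex_sum (hf : f.Monic) (hm : 1 ≤ m) (hdeg : f.natDegree = m) :
    ∀ (N : ℕ) (P : Polynomial ℂ), P.natDegree < (N + 1) * m →
      P = ∑ i ∈ range (N + 1), ex f i P * f ^ i := by
  intro N
  induction N with
  | zero =>
    intro P hP
    have hP' : P.natDegree < m := by simpa using hP
    have hdlt : P.degree < f.degree := by
      rw [degree_eq_natDegree hf.ne_zero, hdeg]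
      refine lt_of_le_of_lt degree_le_natDegree ?_
      exact_mod_cast hP'
    rw [show (0:ℕ) + 1 = 1 from rfl, range_one, Finset.sum_singleton, pow_zero, mul_one]
    exact ((modByMonic_eq_self_iff hf).mpr hdlt).symm
  | succ N ih =>
    intro P hP
    have hdiv : (P /ₘ f).natDegree < (N + 1) * m := by
      rw [natDegree_divByMonic P hf, hdeg]
      have h3 : (N + 1 + 1) * m = (N + 1) * m + m := by ring
      rw [h3] at hP
      have hpos : 0 < (N + 1) * m := Nat.mul_pos (Nat.succ_pos N) (by omega)
      omega
    have hrec := ih (P /ₘ f) hdiv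
    have hsum : ∑ i ∈ range (N + 2), ex f i P * f ^ i
        = ex f 0 P * f ^ 0 + ∑ i ∈ range (N + 1), ex f (i + 1) P * f ^ (i + 1) := by
      rw [show N + 2 = N + 1 + 1 from rfl, Finset.sum_range_succ']; ring
    rw [hsum]
    have h2 : ∑ i ∈ range (N + 1), ex f (i + 1) P * f ^ (i + 1)
        = (∑ i ∈ range (N + 1), ex f i (P /ₘ f) * f ^ i) * f := by
      rw [Finset.sum_mul]
      refine Finset.sum_congr rfl fun i _ => ?_
      show ex f i (P /ₘ f) * f ^ (i + 1) = ex f i (P /ₘ f) * f ^ i * f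
      ring
    rw [h2, ← hrec]
    show P = P %ₘ f * 1 + P /ₘ f * f
    rw [mul_one, mul_comm]
    exact (modByMonic_add_div P f).symm

lemma ex_top (hf : f.Monic) (hm : 1 ≤ m) (hdeg : f.natDegree = m) :
    ∀ (n : ℕ) (P : Polynomial ℂ), P.Monic → P.natDegree = n * m → ex f n P = 1 := by
  intro n
  induction n with
  | zero =>
    intro P hP hPd
    have : P = 1 := hP.natDegree_eq_zero.mp (by simpa using hPd)
    subst this
    show (1 : Polynomial ℂ) %ₘ f = 1
    refine (modByMonic_eq_self_iff hf).mpr ?_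
    rw [degree_one, degree_eq_natDegree hf.ne_zero, hdeg]
    exact_mod_cast Nat.lt_of_lt_of_le Nat.zero_lt_one hm
  | succ n ih =>
    intro P hP hPd
    have hPne : P ≠ 0 := hP.ne_zero
    have hdle : f.degree ≤ P.degree := by
      rw [degree_eq_natDegree hf.ne_zero, degree_eq_natDegree hPne, hdeg, hPd]
      exact_mod_cast Nat.le_mul_of_pos_left m (Nat.succ_pos n)
    have hmonic : (P /ₘ f).Monic := by
      have := leadingCoeff_divByMonic_of_monic hf hdle
      rw [Polynomial.Monic, this, hP.leadingCoeff]
    have hdeg2 : (P /ₘ f).natDegree = n * m := by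
      rw [natDegree_divByMonic P hf, hdeg, hPd, Nat.succ_mul, Nat.add_sub_cancel]
    show ex f n (P /ₘ f) = 1
    exact ih _ hmonic hdeg2

lemma multiset_finset_sum_comm {α : Type*} (μ : Multiset α) (s : Finset ℕ) (g : ℕ → α → ℂ) :
    ∑ i ∈ s, (μ.map (g i)).sum = (μ.map (fun y => ∑ i ∈ s, g i y)).sum := by
  classical
  induction s using Finset.cons_induction with
  | empty => simp
  | cons a s ha ih =>
    rw [Finset.sum_cons]
    have : (μ.map (fun y => ∑ i ∈ Finset.cons a s ha, g i y))
        = μ.map (fun y => g a y + ∑ i ∈ s, g i y) := by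
      refine Multiset.map_congr rfl fun y _ => ?_
      rw [Finset.sum_cons]
    rw [this, Multiset.sum_map_add, ih]

lemma exists_Q (hf : f.Monic) (hm : 1 ≤ m) (hdeg : f.natDegree = m)
    (n : ℕ) (P : Polynomial ℂ) (hP : P.Monic) (hPd : P.natDegree = n * m) :
    ∃ Q : Polynomial ℂ, Q.Monic ∧ Q.natDegree = n ∧
      ∀ w : ℂ, Q.eval w = (m : ℂ)⁻¹ * (((f - C w).roots).map (fun y => P.eval y)).sum := by
  classical
  set Q : Polynomial ℂ := C ((m : ℂ)⁻¹) * ∑ i ∈ range (n + 1), C (S f 0 (ex f i P)) * X ^ i with hQ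
  have hmC : (m : ℂ) ≠ 0 := Nat.cast_ne_zero.mpr (by omega)
  have hcoeffn : Q.coeff n = 1 := by
    rw [hQ, coeff_C_mul, finset_sum_coeff]
    have h1 : ∀ i ∈ range (n + 1), (C (S f 0 (ex f i P)) * X ^ i).coeff n
        = if i = n then S f 0 (ex f i P) else 0 := by
      intro i _
      rw [coeff_C_mul, coeff_X_pow]
      by_cases h : n = i <;> simp [h, eq_comm]
    rw [Finset.sum_congr rfl h1, Finset.sum_ite_eq' (range (n + 1)) n _]
    rw [if_pos (Finset.mem_range.mpr (Nat.lt_succ_self n))]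
    rw [ex_top hf hm hdeg n P hP hPd, S_one hf hm hdeg, inv_mul_cancel₀ hmC]
  have hdegle : Q.natDegree ≤ n := by
    rw [hQ]
    refine le_trans (natDegree_C_mul_le _ _) ?_
    refine natDegree_sum_le_of_forall_le _ _ fun i hi => ?_
    refine le_trans (natDegree_C_mul_le _ _) ?_
    rw [natDegree_X_pow]
    exact Nat.lt_succ_iff.mp (Finset.mem_range.mp hi)
  have hmonic : Q.Monic := monic_of_natDegree_le_of_coeff_eq_one n hdegle hcoeffn
  have hndeg : Q.natDegree = n := by
    rcases lt_or_eq_of_le hdegle with h | h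
    · exact absurd (coeff_eq_zero_of_natDegree_lt h) (by rw [hcoeffn]; exact one_ne_zero)
    · exact h
  refine ⟨Q, hmonic, hndeg, fun w => ?_⟩
  have heval : Q.eval w = (m : ℂ)⁻¹ * ∑ i ∈ range (n + 1), S f 0 (ex f i P) * w ^ i := by
    rw [hQ]
    simp [eval_finset_sum]
  rw [heval]
  congr 1
  have hSw : ∀ i, S f 0 (ex f i P) = S f w (ex f i P) := fun i =>
    (S_const hf hm hdeg (ex_natDegree_le hf hm hdeg i P) w).symm
  calc ∑ i ∈ range (n + 1), S f 0 (ex f i P) * w ^ i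
      = ∑ i ∈ range (n + 1), ((f - C w).roots.map (fun y => (ex f i P).eval y * w ^ i)).sum := by
        refine Finset.sum_congr rfl fun i _ => ?_
        rw [hSw i, S, ← Multiset.sum_map_mul_right]
    _ = ((f - C w).roots.map (fun y => ∑ i ∈ range (n + 1), (ex f i P).eval y * w ^ i)).sum :=
        multiset_finset_sum_comm _ _ _
    _ = ((f - C w).roots.map (fun y => P.eval y)).sum := by
        refine congrArg Multiset.sum (Multiset.map_congr rfl fun y hy => ?_)
        have hyw : f.eval y = w := (mem_roots_iff hf hm hdeg w y).mp hy
        have hPsum := ex_sum hf hm hdeg n P (by rw [hPd]; exact Nat.lt_of_lt_of_le (Nat.lt_succ_self _) (by rw [Nat.succ_mul]; omega))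
        conv_rhs => rw [hPsum]
        rw [eval_finset_sum]
        refine Finset.sum_congr rfl fun i _ => ?_
        rw [eval_mul, eval_pow, hyw]

end
end ChebAux

lemma chebBddAbove {E : Set ℂ} (hE : IsCompact E) {v : ℂ → ℝ} (hvb : BddAbove (v '' E))
    (P : Polynomial ℂ) : BddAbove ((fun z => v z * ‖P.eval z‖) '' E) := by
  obtain ⟨Cv, hCv⟩ := hvb
  obtain ⟨Cg, hCg⟩ := hE.exists_bound_of_continuousOn (P.continuous).continuousOn
  refine ⟨max Cv 0 * max Cg 0, ?_⟩
  rintro r ⟨z, hz, rfl⟩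
  have h1 : v z ≤ max Cv 0 := le_trans (hCv ⟨z, hz, rfl⟩) (le_max_left _ _)
  have h2 : ‖P.eval z‖ ≤ max Cg 0 := by
    have h := hCg z hz
    exact le_trans h (le_max_left _ _)
  rcases le_or_gt (v z) 0 with h0 | h0
  · exact le_trans (mul_nonpos_of_nonpos_of_nonneg h0 (norm_nonneg _))
      (mul_nonneg (le_max_right _ _) (le_max_right _ _))
  · exact mul_le_mul h1 h2 (norm_nonneg _) (le_max_right _ _)

lemma chebWnormNonneg {E : Set ℂ} {v : ℂ → ℝ} {P : Polynomial ℂ} (hne : E.Nonempty)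
    (hb : BddAbove ((fun z => v z * ‖P.eval z‖) '' E))
    (hv0 : ∀ z ∈ E, 0 ≤ v z) : 0 ≤ wnorm E v P := by
  obtain ⟨z, hz⟩ := hne
  exact le_trans (mul_nonneg (hv0 z hz) (norm_nonneg _)) (le_csSup hb ⟨z, hz, rfl⟩)

lemma chebCsSupScale (c : ℝ) (hc : 0 < c) (s : Set ℝ) (hne : s.Nonempty) (hb : BddAbove s) :
    sSup ((fun t => c * t) '' s) = c * sSup s := by
  apply le_antisymm
  · refine csSup_le (hne.image _) ?_
    rintro _ ⟨y, hy, rfl⟩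
    exact mul_le_mul_of_nonneg_left (le_csSup hb hy) hc.le
  · have hbi : BddAbove ((fun t => c * t) '' s) := by
      obtain ⟨B, hB⟩ := hb
      exact ⟨c * B, by rintro _ ⟨y, hy, rfl⟩; exact mul_le_mul_of_nonneg_left (hB hy) hc.le⟩
    rw [mul_comm, ← le_div_iff₀ hc]
    refine csSup_le hne fun y hy => ?_
    rw [le_div_iff₀ hc, mul_comm]
    exact le_csSup hbi (Set.mem_image_of_mem _ hy)

/-- Invariance of weighted Chebyshev norms under polynomial preimages:
`t_{nm}(K, w_K) = t_n(L, w_L) / |a_m|^n` where `K = p⁻¹(L)` and `w_K = w_L ∘ p`. -/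
theorem stmt15 (L : Set ℂ) (hL : IsCompact L) (n : ℕ)
    (hLpts : ∃ S : Finset ℂ, ↑S ⊆ L ∧ n + 1 ≤ S.card)
    (wL : ℂ → ℝ) (hw0 : ∀ z ∈ L, 0 ≤ wL z) (hwb : BddAbove (wL '' L))
    (husc : UpperSemicontinuousOn wL L)
    (hsupp : ∃ S : Finset ℂ, ↑S ⊆ L ∧ n + 1 ≤ S.card ∧ ∀ z ∈ S, wL z ≠ 0)
    (p : Polynomial ℂ) (m : ℕ) (hm : 1 ≤ m) (hpdeg : p.natDegree = m)
    (K : Set ℂ) (hK : K = (fun z => p.eval z) ⁻¹' L)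
    (wK : ℂ → ℝ) (hwK : ∀ z, wK z = wL (p.eval z)) :
    tcheb K wK (n * m) = tcheb L wL n / ‖p.leadingCoeff‖ ^ n := by
  classical
  obtain ⟨Sfin, hSsub, hScard⟩ := hLpts
  have hLne : L.Nonempty := by
    obtain ⟨w0, hw0'⟩ := Finset.card_pos.mp (show 0 < Sfin.card by omega)
    exact ⟨w0, hSsub hw0'⟩
  set a := p.leadingCoeff with ha
  have hpne : p ≠ 0 := fun h => by rw [h, natDegree_zero] at hpdeg; omega
  have ha0 : a ≠ 0 := leadingCoeff_ne_zero.mpr hpne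
  have hdegpos : 0 < p.degree := natDegree_pos_iff_degree_pos.mp (by omega)
  have hsurj : ∀ w : ℂ, ∃ z : ℂ, p.eval z = w := by
    intro w
    have hne : (p - C w).degree ≠ 0 := by
      rw [degree_sub_C hdegpos]; exact hdegpos.ne'
    obtain ⟨z, hz⟩ := IsAlgClosed.exists_root _ hne
    exact ⟨z, by simpa [IsRoot, sub_eq_zero] using hz⟩
  have hKclosed : IsClosed K := by
    rw [hK]; exact hL.isClosed.preimage (Polynomial.continuous p)
  obtain ⟨R, hR⟩ := hL.isBounded.subset_closedBall 0
  have hKb : Bornology.IsBounded K := by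
    rw [Bornology.isBounded_def]
    have ht : Filter.Tendsto (fun z : ℂ => ‖eval z p‖) (Bornology.cobounded ℂ) Filter.atTop :=
      Polynomial.tendsto_norm_atTop p hdegpos tendsto_norm_cobounded_atTop
    have hev : ∀ᶠ z in Bornology.cobounded ℂ, R < ‖eval z p‖ := ht.eventually_gt_atTop R
    refine Filter.mem_of_superset hev ?_
    intro z hz
    simp only [Set.mem_compl_iff]
    intro hzK
    rw [hK] at hzK
    have h2 : ‖p.eval z‖ ≤ R := by
      have := hR hzK
      rwa [Metric.mem_closedBall, dist_zero_right] at this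
    exact absurd hz (not_lt.mpr h2)
  have hKcomp : IsCompact K := Metric.isCompact_of_isClosed_isBounded hKclosed hKb
  have hKne : K.Nonempty := by
    obtain ⟨w0, hw0L⟩ := hLne
    obtain ⟨z0, hz0⟩ := hsurj w0
    exact ⟨z0, by rw [hK]; show p.eval z0 ∈ L; rw [hz0]; exact hw0L⟩
  have hwK0 : ∀ z ∈ K, 0 ≤ wK z := fun z hz => by
    rw [hwK]; exact hw0 _ (by rw [hK] at hz; exact hz)
  have hwKb : BddAbove (wK '' K) := hwb.mono (by
    rintro r ⟨z, hz, rfl⟩; exact ⟨p.eval z, by rw [hK] at hz; exact hz, (hwK z).symm⟩)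
  -- monic normalization of p
  set f := p * C a⁻¹ with hfdef
  have hfm : f.Monic := monic_mul_leadingCoeff_inv hpne
  have hfdeg : f.natDegree = m := by
    rw [hfdef, natDegree_mul hpne (fun h => (inv_ne_zero ha0) (by simpa using h)),
      natDegree_C, add_zero, hpdeg]
  have hroots : ∀ w : ℂ, (p - C w).roots = (f - C (a⁻¹ * w)).roots := by
    intro w
    have h1 : C a * C (a⁻¹ : ℂ) = 1 := by rw [← C_mul, mul_inv_cancel₀ ha0, map_one]
    have h2 : C a * C (a⁻¹ * w) = C w := by rw [← C_mul, ← mul_assoc, mul_inv_cancel₀ ha0, one_mul]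
    have hid : p - C w = C a * (f - C (a⁻¹ * w)) := by
      calc p - C w = (C a * C (a⁻¹ : ℂ)) * p - C a * C (a⁻¹ * w) := by rw [h1, h2, one_mul]
        _ = C a * (p * C a⁻¹ - C (a⁻¹ * w)) := by ring
        _ = C a * (f - C (a⁻¹ * w)) := by rw [← hfdef]
    rw [hid, roots_C_mul _ ha0]
  have hcard : ∀ w : ℂ, Multiset.card (p - C w).roots = m := fun w => by
    rw [hroots w]; exact ChebAux.fw_card hfm hm hfdeg _
  have hmemroots : ∀ w y : ℂ, y ∈ (p - C w).roots ↔ p.eval y = w := by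
    intro w y
    rw [hroots w, ChebAux.mem_roots_iff hfm hm hfdeg]
    have hfe : f.eval y = p.eval y * a⁻¹ := by rw [hfdef, eval_mul, eval_C]
    rw [hfe]
    constructor
    · intro h
      have h2 : p.eval y * a⁻¹ = w * a⁻¹ := h.trans (mul_comm a⁻¹ w)
      exact mul_right_cancel₀ (inv_ne_zero ha0) h2
    · intro h; rw [h]; ring
  set cst := ‖a‖ ^ n with hcst
  have hcst0 : 0 < cst := pow_pos (norm_pos_iff.mpr ha0) n
  -- Direction 1 data
  have key1 : ∀ Q : Polynomial ℂ, Q.Monic → Q.natDegree = n →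
      ∃ P : Polynomial ℂ, P.Monic ∧ P.natDegree = n * m ∧
        wnorm K wK P = wnorm L wL Q / cst := by
    intro Q hQm hQd
    set P := C (a⁻¹ ^ n) * Q.comp p with hPdef
    have hinv : (a⁻¹ : ℂ) ^ n ≠ 0 := pow_ne_zero n (inv_ne_zero ha0)
    have hcompdeg : (Q.comp p).natDegree = n * m := by rw [natDegree_comp, hQd, hpdeg]
    have hPd : P.natDegree = n * m := by rw [hPdef, natDegree_C_mul hinv, hcompdeg]
    have hlc : (Q.comp p).leadingCoeff = a ^ n := by
      rw [leadingCoeff_comp (by omega : p.natDegree ≠ 0), hQm.leadingCoeff, one_mul, hQd]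
    have hPm : P.Monic := by
      show P.leadingCoeff = 1
      rw [hPdef, leadingCoeff_mul, leadingCoeff_C, hlc, ← mul_pow, inv_mul_cancel₀ ha0, one_pow]
    have hPeval : ∀ z : ℂ, wK z * ‖P.eval z‖
        = cst⁻¹ * (wL (p.eval z) * ‖Q.eval (p.eval z)‖) := by
      intro z
      rw [hPdef, eval_mul, eval_C, eval_comp, norm_mul, norm_pow, norm_inv, hwK z, hcst, inv_pow]
      ring
    have hpK : (fun z => p.eval z) '' K = L := by
      apply Set.Subset.antisymm
      · rintro _ ⟨z, hz, rfl⟩; rw [hK] at hz; exact hz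
      · intro w hw
        obtain ⟨z, hz⟩ := hsurj w
        exact ⟨z, by rw [hK]; show p.eval z ∈ L; rw [hz]; exact hw, hz⟩
    have himg : (fun z => wK z * ‖P.eval z‖) '' K
        = (fun t => cst⁻¹ * t) '' ((fun w => wL w * ‖Q.eval w‖) '' L) := by
      calc (fun z => wK z * ‖P.eval z‖) '' K
          = ((fun t => cst⁻¹ * t) ∘ (fun w => wL w * ‖Q.eval w‖)
              ∘ (fun z => p.eval z)) '' K := Set.image_congr fun z _ => hPeval z
        _ = (fun t => cst⁻¹ * t) '' ((fun w => wL w * ‖Q.eval w‖)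
              '' ((fun z => p.eval z) '' K)) := by rw [Set.image_comp, Set.image_comp]
        _ = _ := by rw [hpK]
    have hscale : wnorm K wK P = cst⁻¹ * wnorm L wL Q := by
      rw [wnorm, wnorm, himg]
      exact chebCsSupScale cst⁻¹ (inv_pos.mpr hcst0) _ (hLne.image _) (chebBddAbove hL hwb Q)
    exact ⟨P, hPm, hPd, by rw [hscale, div_eq_mul_inv, mul_comm]⟩
  -- Direction 2 data
  have key2 : ∀ P : Polynomial ℂ, P.Monic → P.natDegree = n * m →
      ∃ Q : Polynomial ℂ, Q.Monic ∧ Q.natDegree = n ∧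
        wnorm L wL Q ≤ cst * wnorm K wK P := by
    intro P hPm hPd
    obtain ⟨Q0, hQ0m, hQ0d, hQ0ev⟩ := ChebAux.exists_Q hfm hm hfdeg n P hPm hPd
    set Q := C (a ^ n) * Q0.comp (C a⁻¹ * X) with hQdef
    have hXdeg : (C (a⁻¹ : ℂ) * X).natDegree = 1 := by
      rw [natDegree_C_mul (inv_ne_zero ha0), natDegree_X]
    have hXlc : (C (a⁻¹ : ℂ) * X).leadingCoeff = a⁻¹ := by
      rw [leadingCoeff_mul, leadingCoeff_C, leadingCoeff_X, mul_one]
    have hcompdeg : (Q0.comp (C a⁻¹ * X)).natDegree = n := by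
      rw [natDegree_comp, hQ0d, hXdeg, mul_one]
    have hQd : Q.natDegree = n := by rw [hQdef, natDegree_C_mul (pow_ne_zero n ha0), hcompdeg]
    have hQm : Q.Monic := by
      have h1 : (Q0.comp (C a⁻¹ * X)).leadingCoeff = a⁻¹ ^ n := by
        rw [leadingCoeff_comp (by rw [hXdeg]; exact one_ne_zero), hQ0m.leadingCoeff, one_mul,
          hXlc, hQ0d]
      show Q.leadingCoeff = 1
      rw [hQdef, leadingCoeff_mul, leadingCoeff_C, h1, ← mul_pow, mul_inv_cancel₀ ha0, one_pow]
    have hQev : ∀ w : ℂ, Q.eval w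
        = a ^ n * ((m : ℂ)⁻¹ * (((p - C w).roots).map (fun y => P.eval y)).sum) := by
      intro w
      rw [hQdef, eval_mul, eval_C, eval_comp, eval_mul, eval_C, eval_X, hQ0ev (a⁻¹ * w),
        hroots w]
    refine ⟨Q, hQm, hQd, ?_⟩
    have hbK := chebBddAbove hKcomp hwKb P
    refine csSup_le (hLne.image _) ?_
    rintro _ ⟨w, hwL', rfl⟩
    have habs : ‖Q.eval w‖ = ‖a‖ ^ n * (m : ℝ)⁻¹
        * ‖(((p - C w).roots).map (fun y => P.eval y)).sum‖ := by
      rw [hQev w, norm_mul, norm_mul, norm_pow, norm_inv, Complex.norm_natCast]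
      ring
    have hsumabs : ‖(((p - C w).roots).map (fun y => P.eval y)).sum‖
        ≤ ((((p - C w).roots).map (fun y => ‖P.eval y‖))).sum := by
      have h := norm_multiset_sum_le (((p - C w).roots).map (fun y => P.eval y))
      rw [Multiset.map_map] at h
      simpa [Function.comp] using h
    have hterm : ∀ y ∈ (p - C w).roots, wL w * ‖P.eval y‖ ≤ wnorm K wK P := by
      intro y hy
      have hpy : p.eval y = w := (hmemroots w y).mp hy
      have hyK : y ∈ K := by rw [hK]; show p.eval y ∈ L; rw [hpy]; exact hwL'
      have hww : wL w = wK y := by rw [hwK, hpy]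
      rw [hww]
      exact le_csSup hbK ⟨y, hyK, rfl⟩
    have hsum2 : ((((p - C w).roots).map (fun y => wL w * ‖P.eval y‖))).sum
        ≤ (m : ℝ) * wnorm K wK P := by
      have h := Multiset.sum_le_card_nsmul
        (((p - C w).roots).map (fun y => wL w * ‖P.eval y‖)) (wnorm K wK P)
        (by rintro x hx
            obtain ⟨y, hy, rfl⟩ := Multiset.mem_map.mp hx
            exact hterm y hy)
      rw [Multiset.card_map, hcard w] at h
      simpa [nsmul_eq_mul] using h
    have hmR : (0:ℝ) < (m : ℝ) := by exact_mod_cast (by omega : 0 < m)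
    calc wL w * ‖Q.eval w‖
        = ‖a‖ ^ n * (m : ℝ)⁻¹
            * (wL w * ‖(((p - C w).roots).map (fun y => P.eval y)).sum‖) := by
          rw [habs]; ring
      _ ≤ ‖a‖ ^ n * (m : ℝ)⁻¹
            * (wL w * (((p - C w).roots).map (fun y => ‖P.eval y‖)).sum) := by
          refine mul_le_mul_of_nonneg_left
            (mul_le_mul_of_nonneg_left hsumabs (hw0 w hwL')) (by positivity)
      _ = ‖a‖ ^ n * (m : ℝ)⁻¹
            * ((((p - C w).roots).map (fun y => wL w * ‖P.eval y‖)).sum) := by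
          rw [← Multiset.sum_map_mul_left]
      _ ≤ ‖a‖ ^ n * (m : ℝ)⁻¹ * ((m : ℝ) * wnorm K wK P) := by
          refine mul_le_mul_of_nonneg_left hsum2 (by positivity)
      _ = cst * wnorm K wK P := by
          rw [hcst]; field_simp
  -- Assembly
  have hALne : {r : ℝ | ∃ P : Polynomial ℂ, P.Monic ∧ P.natDegree = n ∧ r = wnorm L wL P}.Nonempty :=
    ⟨wnorm L wL (X ^ n), X ^ n, monic_X_pow n, natDegree_X_pow n, rfl⟩
  have hAKne : {r : ℝ | ∃ P : Polynomial ℂ, P.Monic ∧ P.natDegree = n * m ∧ r = wnorm K wK P}.Nonempty :=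
    ⟨wnorm K wK (X ^ (n * m)), X ^ (n * m), monic_X_pow _, natDegree_X_pow _, rfl⟩
  have hbbAK : BddBelow {r : ℝ | ∃ P : Polynomial ℂ, P.Monic ∧ P.natDegree = n * m ∧ r = wnorm K wK P} := by
    refine ⟨0, ?_⟩
    rintro r ⟨P, hPm, hPd, rfl⟩
    exact chebWnormNonneg hKne (chebBddAbove hKcomp hwKb P) hwK0
  have hbbAL : BddBelow {r : ℝ | ∃ P : Polynomial ℂ, P.Monic ∧ P.natDegree = n ∧ r = wnorm L wL P} := by
    refine ⟨0, ?_⟩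
    rintro r ⟨Q, hQm, hQd, rfl⟩
    exact chebWnormNonneg hLne (chebBddAbove hL hwb Q) hw0
  rw [tcheb, tcheb]
  apply le_antisymm
  · rw [le_div_iff₀ hcst0]
    refine le_csInf hALne ?_
    rintro r ⟨Q, hQm, hQd, rfl⟩
    rw [← le_div_iff₀ hcst0]
    obtain ⟨P, hPm, hPd, heq⟩ := key1 Q hQm hQd
    rw [← heq]
    exact csInf_le hbbAK ⟨P, hPm, hPd, rfl⟩
  · refine le_csInf hAKne ?_
    rintro r ⟨P, hPm, hPd, rfl⟩
    rw [div_le_iff₀ hcst0]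
    obtain ⟨Q, hQm, hQd, hle⟩ := key2 P hPm hPd
    refine le_trans (csInf_le hbbAL ⟨Q, hQm, hQd, rfl⟩) ?_
    rw [mul_comm] at hle
    exact hle
end
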